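/- arXiv:1403.0177 — 4 statements merged into one kernel-verified Lean document; each statement's English description precedes it below -/
import Mathlib

section
/- For every nonnegative measurable function f on ℝⁿ, the anisotropic polar-coordinates formula holds: ∫_{ℝⁿ} f(x) dx = ∫_{S^{n−1}} ∫_0^∞ f(δ_t ω) t^{Δ−1} (Σᵢ₌₁ⁿ αᵢ ωᵢ²) dt dσ(ω), where σ is the surface measure on the Euclidean unit sphere S^{n−1}. -/
open Finset MeasureTheory Matrix

noncomputable section AnisoAux

/-- The anisotropic change-of-variables map `Φ(x)ᵢ = ‖x‖^(αᵢ-1) xᵢ`. -/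
def anisoPhi {n : ℕ} (α : Fin n → ℝ) (x : EuclideanSpace ℝ (Fin n)) :
    EuclideanSpace ℝ (Fin n) := WithLp.toLp 2 (fun i => ‖x‖ ^ (α i - 1) * x i)

/-- Its derivative at `x ≠ 0`. -/
def anisoPhiD {n : ℕ} (α : Fin n → ℝ) (x : EuclideanSpace ℝ (Fin n)) :
    EuclideanSpace ℝ (Fin n) →L[ℝ] EuclideanSpace ℝ (Fin n) :=
  (PiLp.continuousLinearEquiv 2 ℝ _).symm.toContinuousLinearMap ∘L
    (ContinuousLinearMap.pi fun i =>
      (‖x‖ ^ (α i - 1) : ℝ) • (EuclideanSpace.proj i : EuclideanSpace ℝ (Fin n) →L[ℝ] ℝ) +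
      ((α i - 1) * ‖x‖ ^ (α i - 3) * x i) • (innerSL ℝ x))

lemma anisoPhiD_apply {n : ℕ} (α : Fin n → ℝ) (x v : EuclideanSpace ℝ (Fin n)) (i : Fin n) :
    anisoPhiD α x v i = ‖x‖ ^ (α i - 1) * v i
      + (α i - 1) * ‖x‖ ^ (α i - 3) * x i * (inner ℝ x v : ℝ) := by
  simp [anisoPhiD, mul_assoc]

lemma norm_rpow_eq_sq_rpow {n : ℕ} (y : EuclideanSpace ℝ (Fin n)) (p : ℝ) :
    ‖y‖ ^ p = (‖y‖ ^ 2 : ℝ) ^ (p / 2) := by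
  rw [← Real.rpow_natCast ‖y‖ 2, ← Real.rpow_mul (norm_nonneg y)]
  norm_num
  congr 1
  ring

lemma euclid_sum_sq {n : ℕ} (x : EuclideanSpace ℝ (Fin n)) :
    ∑ i, (x i) ^ 2 = ‖x‖ ^ 2 := by
  rw [EuclideanSpace.norm_eq, Real.sq_sqrt (by positivity)]
  simp [Real.norm_eq_abs, sq_abs]

lemma exists_ne_zero_coord {n : ℕ} {y : EuclideanSpace ℝ (Fin n)} (hy : y ≠ 0) :
    ∃ i, y i ≠ 0 := by
  by_contra h
  push_neg at h
  exact hy (PiLp.ext h)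

lemma anisoPhi_hasFDerivAt {n : ℕ} (α : Fin n → ℝ)
    {x : EuclideanSpace ℝ (Fin n)} (hx : x ≠ 0) :
    HasFDerivAt (anisoPhi α) (anisoPhiD α x) x := by
  have hxn : (0:ℝ) < ‖x‖ := norm_pos_iff.2 hx
  have hx2 : (‖x‖ ^ 2 : ℝ) ≠ 0 := by positivity
  refine HasStrictFDerivAt.hasFDerivAt ?_
  rw [hasStrictFDerivAt_piLp]
  intro i
  set q : ℝ := (α i - 1) / 2 with hq
  have h0 : HasStrictFDerivAt (fun y : EuclideanSpace ℝ (Fin n) => ‖y‖ ^ 2)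
      (2 • (innerSL ℝ x)) x := hasStrictFDerivAt_norm_sq x
  have h1 : HasStrictDerivAt (fun s : ℝ => s ^ q) (q * (‖x‖ ^ 2 : ℝ) ^ (q - 1)) (‖x‖ ^ 2) :=
    Real.hasStrictDerivAt_rpow_const_of_ne hx2 q
  have h2 : HasStrictFDerivAt (fun y : EuclideanSpace ℝ (Fin n) => (‖y‖ ^ 2 : ℝ) ^ q)
      ((q * (‖x‖ ^ 2 : ℝ) ^ (q - 1)) • (2 • (innerSL ℝ x))) x :=
    by have := h1.comp_hasStrictFDerivAt x h0; exact this
  have h3 : HasStrictFDerivAt (fun y : EuclideanSpace ℝ (Fin n) => y i)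
      (EuclideanSpace.proj (𝕜 := ℝ) i : EuclideanSpace ℝ (Fin n) →L[ℝ] ℝ) x := by
    exact (EuclideanSpace.proj (𝕜 := ℝ) i).hasStrictFDerivAt
  have h4 := h2.mul h3
  have heqf : (fun y : EuclideanSpace ℝ (Fin n) => anisoPhi α y i)
      = fun y => (‖y‖ ^ 2 : ℝ) ^ q * y i := by
    funext y
    simp [anisoPhi, hq, norm_rpow_eq_sq_rpow]
  rw [heqf]
  convert h4 using 1
  · rfl
  · rfl
  ext v
  have e1 : (‖x‖ ^ 2 : ℝ) ^ q = ‖x‖ ^ (α i - 1) := (norm_rpow_eq_sq_rpow x _).symm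
  have e2 : (‖x‖ ^ 2 : ℝ) ^ (q - 1) = ‖x‖ ^ (α i - 3) := by
    rw [norm_rpow_eq_sq_rpow x (α i - 3)]
    congr 1
    rw [hq]; ring
  simp only [ContinuousLinearMap.comp_apply, ContinuousLinearMap.add_apply,
    ContinuousLinearMap.smul_apply, PiLp.proj_apply, anisoPhiD_apply]
  simp only [smul_eq_mul, innerSL_apply_apply]
  rw [e1, e2, hq]
  ring

lemma anisoPhiD_det {n : ℕ} (α : Fin n → ℝ) {x : EuclideanSpace ℝ (Fin n)} (hx : x ≠ 0) :
    (anisoPhiD α x).det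
      = ‖x‖ ^ ((∑ i, α i) - n - 2) * ∑ i, α i * (x i) ^ 2 := by
  classical
  have hr : (0:ℝ) < ‖x‖ := norm_pos_iff.2 hx
  set r := ‖x‖ with hrdef
  have hr2 : (r:ℝ) ^ 2 ≠ 0 := by positivity
  set b := (EuclideanSpace.basisFun (Fin n) ℝ).toBasis with hb
  have hdet : (anisoPhiD α x).det = LinearMap.det (anisoPhiD α x).toLinearMap := rfl
  rw [hdet, ← LinearMap.det_toMatrix b (anisoPhiD α x).toLinearMap]
  set u : Fin n → ℝ := fun i => (α i - 1) * x i / r ^ 2 with hu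
  have hM : (LinearMap.toMatrix b b (anisoPhiD α x).toLinearMap)
      = Matrix.diagonal (fun i => r ^ (α i - 1))
        * (1 + Matrix.replicateCol Unit u * Matrix.replicateRow Unit (fun j => x j)) := by
    ext i j
    have h1 : (LinearMap.toMatrix b b (anisoPhiD α x).toLinearMap) i j
        = anisoPhiD α x (b j) i := by
      rw [LinearMap.toMatrix_apply]
      simp [hb]
    have hbj : (b j : EuclideanSpace ℝ (Fin n)) = EuclideanSpace.single j (1:ℝ) := by
      simp [hb]
    have hinner : (inner ℝ x (b j) : ℝ) = x j := by
      rw [hbj, real_inner_comm, EuclideanSpace.inner_single_left]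
      simp
    have hbji : (b j : EuclideanSpace ℝ (Fin n)) i = if i = j then 1 else 0 := by
      rw [hbj]; simp [EuclideanSpace.single_apply, eq_comm]
    rw [h1, anisoPhiD_apply, hinner, hbji, Matrix.diagonal_mul]
    have hN : ((1 + Matrix.replicateCol Unit u * Matrix.replicateRow Unit (fun j => x j)
          : Matrix (Fin n) (Fin n) ℝ)) i j
        = (if i = j then 1 else 0) + u i * x j := by
      simp [Matrix.add_apply, Matrix.one_apply, Matrix.mul_apply]
    rw [hN]
    have e3 : r ^ (α i - 3) = r ^ (α i - 1) / r ^ 2 := by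
      rw [show (α i - 3 : ℝ) = (α i - 1) - (2:ℕ) by push_cast; ring,
        Real.rpow_sub hr, Real.rpow_natCast]
    rw [e3, hu]
    by_cases h : i = j
    · subst h; field_simp; ring
    · simp only [h, if_false]; field_simp; ring
  rw [hM, Matrix.det_mul, Matrix.det_diagonal, Matrix.det_one_add_replicateCol_mul_replicateRow]
  have hsq : ∑ i, (x i)^2 = r ^ 2 := euclid_sum_sq x
  have hprod : (∏ i, r ^ (α i - 1)) = r ^ ((∑ i, α i) - n) := by
    rw [← Real.rpow_sum_of_pos hr]
    congr 1
    rw [Finset.sum_sub_distrib]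
    simp
  set S := ∑ i, α i * (x i) ^ 2 with hS
  have hterm : ∀ i : Fin n, x i * ((α i - 1) * x i / r ^ 2)
      = α i * x i ^ 2 / r ^ 2 - x i ^ 2 / r ^ 2 := by
    intro i; field_simp
  have hdot : ((fun j => x j) ⬝ᵥ u) = S / r ^ 2 - 1 := by
    calc ((fun j => x j) ⬝ᵥ u) = ∑ i, (α i * x i ^ 2 / r ^ 2 - x i ^ 2 / r ^ 2) := by
          simp only [dotProduct, hu]
          exact Finset.sum_congr rfl fun i _ => hterm i
      _ = (∑ i, α i * x i ^ 2) / r ^ 2 - (∑ i, x i ^ 2) / r ^ 2 := by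
          rw [Finset.sum_sub_distrib, Finset.sum_div, Finset.sum_div]
      _ = S / r ^ 2 - 1 := by rw [hsq, hS]; field_simp
  rw [hprod, hdot]
  have h1 : (1:ℝ) + (S / r ^ 2 - 1) = S / r ^ 2 := by ring
  have e4 : r ^ ((∑ i, α i) - (n:ℝ) - 2) = r ^ ((∑ i, α i) - (n:ℝ)) / r ^ 2 := by
    rw [show ((∑ i, α i) - (n:ℝ) - 2) = ((∑ i, α i) - (n:ℝ)) - (2:ℕ) by push_cast; ring,
      Real.rpow_sub hr, Real.rpow_natCast]
  rw [h1, e4]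
  ring

/-- The anisotropic gauge function. -/
def anisoG {n : ℕ} (α : Fin n → ℝ) (y : EuclideanSpace ℝ (Fin n)) (t : ℝ) : ℝ :=
  ∑ i, t ^ (-(2 * α i)) * (y i) ^ 2

lemma anisoG_strictAntiOn {n : ℕ} (α : Fin n → ℝ) (hα : ∀ i, 0 < α i)
    {y : EuclideanSpace ℝ (Fin n)} (hy : y ≠ 0) :
    StrictAntiOn (anisoG α y) (Set.Ioi 0) := by
  intro a ha b hb hab
  obtain ⟨i0, hi0⟩ := exists_ne_zero_coord hy
  refine Finset.sum_lt_sum (fun i _ => ?_) ⟨i0, Finset.mem_univ i0, ?_⟩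
  · exact mul_le_mul_of_nonneg_right
      (Real.rpow_le_rpow_of_nonpos ha hab.le (by nlinarith [hα i])) (sq_nonneg _)
  · exact mul_lt_mul_of_pos_right
      (Real.rpow_lt_rpow_of_neg ha hab (by nlinarith [hα i0]))
      (by positivity)

lemma anisoG_norm {n : ℕ} (α : Fin n → ℝ) {x : EuclideanSpace ℝ (Fin n)} (hx : x ≠ 0) :
    anisoG α (anisoPhi α x) ‖x‖ = 1 := by
  have hr : (0:ℝ) < ‖x‖ := norm_pos_iff.2 hx
  have hterm : ∀ i : Fin n, ‖x‖ ^ (-(2 * α i)) * (anisoPhi α x i) ^ 2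
      = ‖x‖ ^ (-(2:ℝ)) * (x i) ^ 2 := by
    intro i
    have h2 : (anisoPhi α x i) ^ 2 = (‖x‖ ^ (α i - 1)) ^ 2 * (x i) ^ 2 := by
      rw [anisoPhi, PiLp.toLp_apply]; ring
    have h3 : (‖x‖ ^ (α i - 1) : ℝ) ^ 2 = ‖x‖ ^ (2 * α i - 2) := by
      rw [← Real.rpow_natCast (‖x‖ ^ (α i - 1)) 2, ← Real.rpow_mul (norm_nonneg x)]
      norm_num
      ring_nf
    rw [h2, h3, ← mul_assoc, ← Real.rpow_add hr]
    ring_nf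
  rw [anisoG]
  simp only [hterm]
  rw [← Finset.mul_sum, euclid_sum_sq, Real.rpow_neg (norm_nonneg x),
    show ((2:ℝ)) = ((2:ℕ):ℝ) by norm_num, Real.rpow_natCast]
  field_simp

lemma anisoPhi_ne_zero {n : ℕ} (α : Fin n → ℝ) {x : EuclideanSpace ℝ (Fin n)} (hx : x ≠ 0) :
    anisoPhi α x ≠ 0 := by
  obtain ⟨i, hi⟩ := exists_ne_zero_coord hx
  have hr : (0:ℝ) < ‖x‖ := norm_pos_iff.2 hx
  intro h
  have : anisoPhi α x i = 0 := by rw [h]; rfl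
  rw [anisoPhi] at this
  have hpow : (0:ℝ) < ‖x‖ ^ (α i - 1) := Real.rpow_pos_of_pos hr _
  exact hi (by
    rcases mul_eq_zero.1 this with h' | h'
    · exact absurd h' (ne_of_gt hpow)
    · exact h')

lemma anisoPhi_injOn {n : ℕ} (α : Fin n → ℝ) (hα : ∀ i, 0 < α i) :
    Set.InjOn (anisoPhi α) {(0 : EuclideanSpace ℝ (Fin n))}ᶜ := by
  intro x hx y hy h
  have hx0 : x ≠ 0 := hx
  have hy0 : y ≠ 0 := hy
  have hrx : (0:ℝ) < ‖x‖ := norm_pos_iff.2 hx0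
  have hry : (0:ℝ) < ‖y‖ := norm_pos_iff.2 hy0
  have h1 : anisoG α (anisoPhi α x) ‖x‖ = 1 := anisoG_norm α hx0
  have h2 : anisoG α (anisoPhi α x) ‖y‖ = 1 := by rw [h]; exact anisoG_norm α hy0
  have hnorm : ‖x‖ = ‖y‖ :=
    (anisoG_strictAntiOn α hα (anisoPhi_ne_zero α hx0)).injOn hrx hry (h1.trans h2.symm)
  ext i
  have := congrArg (· i) h
  rw [anisoPhi, anisoPhi] at this
  simp only at this
  rw [← hnorm] at this
  exact mul_left_cancel₀ (ne_of_gt (Real.rpow_pos_of_pos hrx _)) this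

lemma anisoG_continuousOn {n : ℕ} (α : Fin n → ℝ) (y : EuclideanSpace ℝ (Fin n))
    {s : Set ℝ} (hs : ∀ t ∈ s, (0:ℝ) < t) : ContinuousOn (anisoG α y) s := by
  apply continuousOn_finset_sum
  intro i _
  refine ContinuousOn.mul ?_ continuousOn_const
  intro t ht
  exact (Real.continuousAt_rpow_const t _ (Or.inl (ne_of_gt (hs t ht)))).continuousWithinAt

lemma anisoPhi_surj {n : ℕ} (hn : 0 < n) (α : Fin n → ℝ) (hα : ∀ i, 0 < α i)
    {y : EuclideanSpace ℝ (Fin n)} (hy : y ≠ 0) :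
    ∃ x : EuclideanSpace ℝ (Fin n), x ≠ 0 ∧ anisoPhi α x = y := by
  obtain ⟨i0, hi0⟩ : ∃ i, y i ≠ 0 := exists_ne_zero_coord hy
  have hyi0 : (0:ℝ) < y i0 ^ 2 := by positivity
  set a : ℝ := min 1 ((y i0 ^ 2) ^ (1 / (2 * α i0))) with hadef
  have hapos : 0 < a := lt_min one_pos (Real.rpow_pos_of_pos hyi0 _)
  have ha1 : a ≤ 1 := min_le_left _ _
  have hGa : 1 ≤ anisoG α y a := by
    have hexp : (0:ℝ) < 2 * α i0 := by nlinarith [hα i0]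
    have h1 : a ^ (2 * α i0) ≤ y i0 ^ 2 := by
      calc a ^ (2 * α i0) ≤ ((y i0 ^ 2) ^ (1 / (2 * α i0))) ^ (2 * α i0) :=
            Real.rpow_le_rpow hapos.le (min_le_right _ _) hexp.le
        _ = y i0 ^ 2 := by
            rw [← Real.rpow_mul hyi0.le, one_div, inv_mul_cancel₀ (ne_of_gt hexp),
              Real.rpow_one]
    have hterm : 1 ≤ a ^ (-(2 * α i0)) * y i0 ^ 2 := by
      rw [Real.rpow_neg hapos.le, inv_mul_eq_div, le_div_iff₀ (Real.rpow_pos_of_pos hapos _)]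
      simpa using h1
    refine le_trans hterm ?_
    rw [anisoG]
    exact Finset.single_le_sum (f := fun i => a ^ (-(2 * α i)) * y i ^ 2)
      (fun i _ => by positivity) (Finset.mem_univ i0)
  set b : ℝ := max 1 (∑ i, (((n:ℝ) * y i ^ 2) ^ (1 / (2 * α i)))) with hbdef
  have hb1 : (1:ℝ) ≤ b := le_max_left _ _
  have hbpos : (0:ℝ) < b := lt_of_lt_of_le one_pos hb1
  have hGb : anisoG α y b ≤ 1 := by
    have hterm : ∀ i : Fin n, b ^ (-(2 * α i)) * y i ^ 2 ≤ 1 / n := by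
      intro i
      have hexp : (0:ℝ) < 2 * α i := by nlinarith [hα i]
      have hble : ((n:ℝ) * y i ^ 2) ^ (1 / (2 * α i)) ≤ b := by
        refine le_trans ?_ (le_max_right _ _)
        exact Finset.single_le_sum (f := fun j => ((n:ℝ) * y j ^ 2) ^ (1 / (2 * α j)))
          (fun j _ => by positivity) (Finset.mem_univ i)
      have h1 : (n:ℝ) * y i ^ 2 ≤ b ^ (2 * α i) := by
        calc (n:ℝ) * y i ^ 2 = (((n:ℝ) * y i ^ 2) ^ (1 / (2 * α i))) ^ (2 * α i) := by
              rw [← Real.rpow_mul (by positivity), one_div,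
                inv_mul_cancel₀ (ne_of_gt hexp), Real.rpow_one]
          _ ≤ b ^ (2 * α i) := Real.rpow_le_rpow (by positivity) hble hexp.le
      rw [Real.rpow_neg hbpos.le, inv_mul_eq_div, div_le_div_iff₀ (Real.rpow_pos_of_pos hbpos _)
        (by exact_mod_cast hn)]
      nlinarith [h1]
    rw [anisoG]
    calc (∑ i, b ^ (-(2 * α i)) * (y i) ^ 2) ≤ ∑ _i : Fin n, (1:ℝ) / n :=
          Finset.sum_le_sum fun i _ => hterm i
      _ = 1 := by
        rw [Finset.sum_const, Finset.card_univ, Fintype.card_fin, nsmul_eq_mul]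
        field_simp
  have hab : a ≤ b := le_trans ha1 hb1
  have hcont : ContinuousOn (anisoG α y) (Set.Icc a b) :=
    anisoG_continuousOn α y (fun t ht => lt_of_lt_of_le hapos ht.1)
  have h1mem : (1:ℝ) ∈ Set.Icc (anisoG α y b) (anisoG α y a) := ⟨hGb, hGa⟩
  obtain ⟨t, htmem, htG⟩ := intermediate_value_Icc' hab hcont h1mem
  have htpos : 0 < t := lt_of_lt_of_le hapos htmem.1
  set x : EuclideanSpace ℝ (Fin n) := WithLp.toLp 2 (fun i => t ^ (1 - α i) * y i) with hxdef
  have hsq : ∀ i : Fin n, (x i) ^ 2 = t ^ 2 * (t ^ (-(2 * α i)) * y i ^ 2) := by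
    intro i
    have h3 : (t ^ (1 - α i) : ℝ) ^ 2 = t ^ (2 - 2 * α i) := by
      rw [← Real.rpow_natCast (t ^ (1 - α i)) 2, ← Real.rpow_mul htpos.le]
      congr 1
      push_cast
      ring
    have h2 : (x i) ^ 2 = (t ^ (1 - α i) : ℝ) ^ 2 * y i ^ 2 := by rw [hxdef]; ring
    rw [h2, h3, show (2 - 2 * α i : ℝ) = 2 + (-(2 * α i)) by ring, Real.rpow_add htpos,
      show ((2:ℝ)) = ((2:ℕ):ℝ) by norm_num, Real.rpow_natCast]
    ring
  have hxnorm : ‖x‖ = t := by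
    have hn2 : ‖x‖ ^ 2 = t ^ 2 := by
      rw [← euclid_sum_sq x]
      calc ∑ i, (x i) ^ 2 = ∑ i, t ^ 2 * (t ^ (-(2 * α i)) * y i ^ 2) :=
            Finset.sum_congr rfl fun i _ => hsq i
        _ = t ^ 2 * anisoG α y t := by rw [← Finset.mul_sum]; rfl
        _ = t ^ 2 := by rw [htG, mul_one]
    have := congrArg Real.sqrt hn2
    rwa [Real.sqrt_sq (norm_nonneg x), Real.sqrt_sq htpos.le] at this
  refine ⟨x, ?_, ?_⟩
  · intro h0
    rw [h0] at hxnorm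
    simp at hxnorm
    exact htpos.ne' hxnorm.symm
  · ext i
    rw [anisoPhi]
    simp only
    rw [hxnorm, hxdef]
    simp only
    rw [← mul_assoc, ← Real.rpow_add htpos,
      show (α i - 1) + (1 - α i) = 0 by ring, Real.rpow_zero, one_mul]

end AnisoAux

/-- anisotropic polar coordinates: for every nonnegative measurable `f`,
`∫ f = ∫_{S^{n−1}} ∫_0^∞ f(δ_t ω) t^{Δ−1} (∑ αᵢ ωᵢ²) dt dσ(ω)`, where `σ` is the surface
measure on the Euclidean unit sphere (characterized by the standard polar coordinates). -/
theorem anisotropic_polar_coordinates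
    (n : ℕ) (hn : 2 ≤ n) (α : Fin n → ℝ) (hα : ∀ i, 0 < α i)
    (σ : Measure (Metric.sphere (0 : EuclideanSpace ℝ (Fin n)) 1))
    (hσ : ∀ g : EuclideanSpace ℝ (Fin n) → ENNReal, Measurable g →
      ∫⁻ x, g x = ∫⁻ ω, ∫⁻ t in Set.Ioi (0:ℝ),
        g (t • (ω : EuclideanSpace ℝ (Fin n))) * ENNReal.ofReal (t ^ ((n : ℝ) - 1)) ∂volume ∂σ)
    (f : EuclideanSpace ℝ (Fin n) → ENNReal) (hf : Measurable f) :
    ∫⁻ x, f x = ∫⁻ ω, ∫⁻ t in Set.Ioi (0:ℝ),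
      f (WithLp.toLp 2 (fun i => t ^ (α i) * (ω : EuclideanSpace ℝ (Fin n)) i)) *
        ENNReal.ofReal (t ^ ((∑ i, α i) - 1) * ∑ i, α i * ((ω : EuclideanSpace ℝ (Fin n)) i) ^ 2)
      ∂volume ∂σ := by
  classical
  have hn0 : 0 < n := lt_of_lt_of_le two_pos hn
  set g : EuclideanSpace ℝ (Fin n) → ENNReal := fun x =>
    ENNReal.ofReal (‖x‖ ^ ((∑ i, α i) - n - 2) * ∑ i, α i * (x i) ^ 2) * f (anisoPhi α x)
    with hgdef
  have hPhiMeas : Measurable (anisoPhi α) := by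
    refine (WithLp.measurable_toLp 2 _).comp ?_
    rw [measurable_pi_iff]
    intro i
    exact (Measurable.pow measurable_norm measurable_const).mul ((measurable_pi_apply i).comp (WithLp.measurable_ofLp 2 _))
  have hgMeas : Measurable g := by
    apply Measurable.mul
    · apply Measurable.ennreal_ofReal
      exact (Measurable.pow measurable_norm measurable_const).mul
        (Finset.measurable_sum _ fun i _ =>
          measurable_const.mul (((measurable_pi_apply i).comp (WithLp.measurable_ofLp 2 _)).pow measurable_const))
    · exact hf.comp hPhiMeas
  have hS : MeasurableSet ({(0 : EuclideanSpace ℝ (Fin n))}ᶜ : Set _) :=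
    (measurableSet_singleton 0).compl
  have hNontriv : Nontrivial (EuclideanSpace ℝ (Fin n)) := by
    refine ⟨EuclideanSpace.single ⟨0, hn0⟩ 1, 0, ?_⟩
    intro hcontra
    have := congrArg (· ⟨0, hn0⟩) hcontra
    simp [EuclideanSpace.single_apply] at this
  have h0vol : volume ({(0 : EuclideanSpace ℝ (Fin n))} : Set _) = 0 := measure_singleton 0
  have hrestr : (volume : Measure (EuclideanSpace ℝ (Fin n))).restrict
      {(0 : EuclideanSpace ℝ (Fin n))}ᶜ = volume := by
    apply Measure.restrict_eq_self_of_ae_mem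
    have hset : {x : EuclideanSpace ℝ (Fin n) |
        ¬ x ∈ ({(0 : EuclideanSpace ℝ (Fin n))}ᶜ : Set _)} = {0} := by
      ext z; simp
    rw [MeasureTheory.ae_iff, hset]
    exact h0vol
  have himg : anisoPhi α '' {(0 : EuclideanSpace ℝ (Fin n))}ᶜ
      = {(0 : EuclideanSpace ℝ (Fin n))}ᶜ := by
    apply Set.Subset.antisymm
    · rintro y ⟨x, hx, rfl⟩
      exact anisoPhi_ne_zero α hx
    · intro y hy
      obtain ⟨x, hx0, hxy⟩ := anisoPhi_surj hn0 α hα hy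
      exact ⟨x, hx0, hxy⟩
  have hder : ∀ x ∈ ({(0 : EuclideanSpace ℝ (Fin n))}ᶜ : Set _),
      HasFDerivWithinAt (anisoPhi α) (anisoPhiD α x) {(0 : EuclideanSpace ℝ (Fin n))}ᶜ x :=
    fun x hx => (anisoPhi_hasFDerivAt α hx).hasFDerivWithinAt
  have hCoV := lintegral_image_eq_lintegral_abs_det_fderiv_mul volume hS hder
    (anisoPhi_injOn α hα) f
  have hcongr : ∫⁻ x in {(0 : EuclideanSpace ℝ (Fin n))}ᶜ,
      ENNReal.ofReal |(anisoPhiD α x).det| * f (anisoPhi α x)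
      = ∫⁻ x in {(0 : EuclideanSpace ℝ (Fin n))}ᶜ, g x := by
    apply setLIntegral_congr_fun hS
    intro x hx
    have hdet := anisoPhiD_det α hx
    have hr : (0:ℝ) < ‖x‖ := norm_pos_iff.2 hx
    obtain ⟨i, hi⟩ := exists_ne_zero_coord hx
    have hsum : (0:ℝ) < ∑ i, α i * (x i) ^ 2 :=
      Finset.sum_pos' (fun j _ => mul_nonneg (hα j).le (sq_nonneg _))
        ⟨i, Finset.mem_univ i, by have := hα i; positivity⟩
    have hpos : (0:ℝ) < ‖x‖ ^ ((∑ i, α i) - n - 2) * ∑ i, α i * (x i) ^ 2 :=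
      mul_pos (Real.rpow_pos_of_pos hr _) hsum
    rw [hgdef]
    simp only
    rw [hdet, abs_of_pos hpos]
  have key : ∀ t : ℝ, 0 < t → ∀ ω : EuclideanSpace ℝ (Fin n), ‖ω‖ = 1 →
      g (t • ω) * ENNReal.ofReal (t ^ ((n : ℝ) - 1))
        = f (WithLp.toLp 2 (fun i => t ^ (α i) * ω i)) *
          ENNReal.ofReal (t ^ ((∑ i, α i) - 1) * ∑ i, α i * (ω i) ^ 2) := by
    intro t ht ω hω
    have hnrm : ‖t • ω‖ = t := by
      rw [norm_smul, hω, mul_one, Real.norm_eq_abs, abs_of_pos ht]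
    have hPhiEq : anisoPhi α (t • ω) = WithLp.toLp 2 (fun i => t ^ (α i) * ω i) := by
      ext i
      show ‖t • ω‖ ^ (α i - 1) * (t • ω) i = t ^ (α i) * ω i
      have happ : (t • ω) i = t * ω i := rfl
      rw [hnrm, happ, ← mul_assoc, ← Real.rpow_add_one (ne_of_gt ht) (α i - 1),
        sub_add_cancel]
    have hsumval : ∑ i, α i * ((t • ω) i) ^ 2 = t ^ 2 * ∑ i, α i * (ω i) ^ 2 := by
      rw [Finset.mul_sum]
      refine Finset.sum_congr rfl fun i _ => ?_
      have happ : (t • ω) i = t * ω i := rfl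
      rw [happ]; ring
    have hJnonneg : (0:ℝ) ≤ ‖t • ω‖ ^ ((∑ i, α i) - n - 2) * ∑ i, α i * ((t • ω) i) ^ 2 :=
      mul_nonneg (Real.rpow_nonneg (norm_nonneg _) _)
        (Finset.sum_nonneg fun i _ => mul_nonneg (hα i).le (sq_nonneg _))
    rw [hgdef]
    simp only
    rw [hPhiEq, mul_comm (ENNReal.ofReal _) (f _), mul_assoc,
      ← ENNReal.ofReal_mul hJnonneg]
    congr 1
    rw [hnrm, hsumval]
    congr 1
    have epow : t ^ ((∑ i, α i) - (n:ℝ) - 2) * t ^ (2:ℕ) * t ^ ((n:ℝ) - 1)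
        = t ^ ((∑ i, α i) - 1) := by
      rw [← Real.rpow_natCast t 2, ← Real.rpow_add ht, ← Real.rpow_add ht]
      congr 1
      push_cast
      ring
    calc t ^ ((∑ i, α i) - (n:ℝ) - 2) * (t ^ 2 * ∑ i, α i * (ω i) ^ 2) * t ^ ((n:ℝ) - 1)
        = (t ^ ((∑ i, α i) - (n:ℝ) - 2) * t ^ (2:ℕ) * t ^ ((n:ℝ) - 1))
            * ∑ i, α i * (ω i) ^ 2 := by ring
      _ = t ^ ((∑ i, α i) - 1) * ∑ i, α i * (ω i) ^ 2 := by rw [epow]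
  calc ∫⁻ x, f x = ∫⁻ x in {(0 : EuclideanSpace ℝ (Fin n))}ᶜ, f x := by rw [hrestr]
    _ = ∫⁻ x in anisoPhi α '' {(0 : EuclideanSpace ℝ (Fin n))}ᶜ, f x := by rw [himg]
    _ = ∫⁻ x in {(0 : EuclideanSpace ℝ (Fin n))}ᶜ,
          ENNReal.ofReal |(anisoPhiD α x).det| * f (anisoPhi α x) := hCoV
    _ = ∫⁻ x in {(0 : EuclideanSpace ℝ (Fin n))}ᶜ, g x := hcongr
    _ = ∫⁻ x, g x := by rw [hrestr]
    _ = ∫⁻ ω, ∫⁻ t in Set.Ioi (0:ℝ),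
          g (t • (ω : EuclideanSpace ℝ (Fin n))) * ENNReal.ofReal (t ^ ((n : ℝ) - 1))
          ∂volume ∂σ := hσ g hgMeas
    _ = _ := by
        refine lintegral_congr fun ω => ?_
        refine setLIntegral_congr_fun measurableSet_Ioi
          (fun t ht => ?_)
        have hω : ‖(ω : EuclideanSpace ℝ (Fin n))‖ = 1 := by
          have h2 := ω.2
          rwa [mem_sphere_iff_norm, sub_zero] at h2
        exact key t ht (ω : EuclideanSpace ℝ (Fin n)) hω
end

section
/- Let φ ∈ 𝒮(ℝⁿ) be a Schwartz function with ∫_{ℝⁿ} φ(x) dx = 0. Then there exist universal constants C > 0 and α > 0 (depending only on the anisotropic norm ρ and the dimension n) and a sequence of functions ψ_m ∈ C_c^∞(ℝⁿ), m = 0, 1, 2, …, such that: (i) φ = Σ_{m≥0} ψ_m; (ii) supp ψ_m ⊆ {x : ρ(x) ≤ C 2^{αm}}; (iii) ∫_{ℝⁿ} ψ_m(x) dx = 0 for every m; and (iv) for every p ∈ [1,∞] and every M > 0 there is a constant C_{p,M} with ‖ψ_m‖_{L^p} ≤ C_{p,M} 2^{−mM} and ‖ψ̂_m‖_{L^p}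 ≤ C_{p,M} 2^{−mM} for all m, where ψ̂_m denotes the Fourier transform of ψ_m. -/
open Finset MeasureTheory

open Finset MeasureTheory Metric Function Filter
open scoped FourierTransform ENNReal NNReal SchwartzMap ContDiff Topology

noncomputable section
namespace SDhelp

abbrev Ee (n : ℕ) : Type := EuclideanSpace ℝ (Fin n)

variable {n : ℕ}

/-- compactly supported smooth functions are Schwartz -/
def toSchwartz (f : Ee n → ℂ) (h1 : ContDiff ℝ ∞ f) (h2 : HasCompactSupport f) :
    𝓢(Ee n, ℂ) where
  toFun := f
  smooth' := h1
  decay' := by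
    intro k j
    obtain ⟨R, hR⟩ := h2.isBounded.subset_closedBall 0
    obtain ⟨C, hC⟩ := (h2.iteratedFDeriv j).exists_bound_of_continuous
      (h1.continuous_iteratedFDeriv (mod_cast le_top))
    have hC0 : 0 ≤ C := le_trans (norm_nonneg _) (hC 0)
    refine ⟨(|R| + 1) ^ k * C, fun x => ?_⟩
    by_cases hx : x ∈ tsupport f
    · have h1x : ‖x‖ ≤ |R| + 1 := by
        have := hR hx
        simp only [mem_closedBall, dist_zero_right] at this
        have : R ≤ |R| := le_abs_self R
        linarith [hR hx, mem_closedBall_zero_iff.mp (hR hx)]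
      exact mul_le_mul (pow_le_pow_left₀ (norm_nonneg x) h1x k) (hC x)
        (norm_nonneg _) (by positivity)
    · have : iteratedFDeriv ℝ j f x = 0 := by
        have hns : x ∉ support (iteratedFDeriv ℝ j f) :=
          fun hmem => hx (support_iteratedFDeriv_subset j hmem)
        simpa [Function.mem_support, not_not] using hns
      rw [this, norm_zero, mul_zero]
      positivity


lemma rho_le_of_norm_le {α : Fin n → ℝ} (hα : ∀ i, 1 ≤ α i)
    {ρ : Ee n → ℝ} (hρ0 : ρ 0 = 0)
    (hρ : ∀ x : Ee n, x ≠ 0 → 0 < ρ x ∧ ∑ i, (x i) ^ 2 * (ρ x) ^ (-(2 * α i)) = 1)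
    {x : Ee n} {R : ℝ} (hR : 1 ≤ R) (hx : ‖x‖ ≤ R) : ρ x ≤ R := by
  rcases eq_or_ne x 0 with rfl | hx0
  · rw [hρ0]; linarith
  obtain ⟨hpos, hsum⟩ := hρ x hx0
  by_contra hlt
  push_neg at hlt
  set r := ρ x with hr
  have hr1 : 1 < r := lt_of_le_of_lt hR hlt
  have key : ∀ i ∈ Finset.univ (α := Fin n),
      (x i) ^ 2 * r ^ (-(2 * α i)) ≤ (x i) ^ 2 * r ^ (-(2 : ℝ)) := by
    intro i _
    refine mul_le_mul_of_nonneg_left ?_ (sq_nonneg _)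
    apply Real.rpow_le_rpow_of_exponent_le hr1.le
    nlinarith [hα i]
  have hnorm : ∑ i, (x i) ^ 2 = ‖x‖ ^ 2 := by
    rw [EuclideanSpace.norm_eq, Real.sq_sqrt (by positivity)]
    exact Finset.sum_congr rfl fun i _ => by rw [Real.norm_eq_abs, sq_abs]
  have h2 : (1 : ℝ) ≤ ‖x‖ ^ 2 * r ^ (-(2 : ℝ)) := by
    calc (1 : ℝ) = ∑ i, (x i) ^ 2 * r ^ (-(2 * α i)) := hsum.symm
    _ ≤ ∑ i, (x i) ^ 2 * r ^ (-(2 : ℝ)) := Finset.sum_le_sum key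
    _ = (∑ i, (x i) ^ 2) * r ^ (-(2 : ℝ)) := (Finset.sum_mul _ _ _).symm
    _ = ‖x‖ ^ 2 * r ^ (-(2 : ℝ)) := by rw [hnorm]
  have hrpow : r ^ (-(2 : ℝ)) = (r ^ 2)⁻¹ := by
    rw [Real.rpow_neg (by linarith), Real.rpow_two]
  rw [hrpow] at h2
  have hlt2 : ‖x‖ ^ 2 * (r ^ 2)⁻¹ < 1 := by
    rw [mul_inv_lt_iff₀ (by positivity), one_mul]
    have h3 : ‖x‖ ^ 2 ≤ R ^ 2 := by nlinarith [norm_nonneg x]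
    nlinarith
  linarith


def bf (n : ℕ) : ContDiffBump (0 : Ee n) := ⟨1, 2, one_pos, one_lt_two⟩

def th (n : ℕ) (m : ℕ) : Ee n → ℝ := fun x => bf n (((2 : ℝ) ^ m)⁻¹ • x)

lemma th_smooth (m : ℕ) : ContDiff ℝ ∞ (th n m) :=
  (bf n).contDiff.comp (contDiff_const_smul _)

lemma th_nonneg (m : ℕ) (x : Ee n) : 0 ≤ th n m x := (bf n).nonneg

lemma th_le_one (m : ℕ) (x : Ee n) : th n m x ≤ 1 := (bf n).le_one

lemma th_one {m : ℕ} {x : Ee n} (h : ‖x‖ ≤ 2 ^ m) : th n m x = 1 := by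
  apply ContDiffBump.one_of_mem_closedBall
  rw [mem_closedBall, dist_zero_right, norm_smul, norm_inv, norm_pow,
    Real.norm_ofNat]
  have h2 : (0:ℝ) < 2 ^ m := by positivity
  rw [show (bf n).rIn = 1 from rfl]
  rw [inv_mul_le_iff₀ h2]
  linarith

lemma th_zero {m : ℕ} {x : Ee n} (h : 2 ^ (m + 1) ≤ ‖x‖) : th n m x = 0 := by
  apply ContDiffBump.zero_of_le_dist
  rw [dist_zero_right, norm_smul, norm_inv, norm_pow, Real.norm_ofNat]
  rw [show (bf n).rOut = 2 from rfl]
  have h2 : (0:ℝ) < 2 ^ m := by positivity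
  rw [le_inv_mul_iff₀ h2]
  calc (2:ℝ) ^ m * 2 = 2 ^ (m+1) := by ring
  _ ≤ ‖x‖ := h

lemma th_deriv_bound (j : ℕ) : ∃ B : ℝ, 0 ≤ B ∧
    ∀ (m : ℕ) (x : Ee n), ‖iteratedFDeriv ℝ j (th n m) x‖ ≤ B := by
  have hbf : ContDiff ℝ ∞ ⇑(bf n) := (bf n).contDiff
  obtain ⟨C, hC⟩ := ((bf n).hasCompactSupport.iteratedFDeriv j).exists_bound_of_continuous
    ((hbf).continuous_iteratedFDeriv (mod_cast le_top))
  refine ⟨max C 0, le_max_right _ _, fun m x => ?_⟩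
  set L : Ee n →L[ℝ] Ee n := ((2:ℝ) ^ m)⁻¹ • ContinuousLinearMap.id ℝ (Ee n) with hL
  have hth : th n m = ⇑(bf n) ∘ ⇑L := by
    funext y; simp [th, hL]
  rw [hth, ContinuousLinearMap.iteratedFDeriv_comp_right L hbf x (mod_cast le_top)]
  apply (ContinuousMultilinearMap.norm_compContinuousLinearMap_le _ _).trans
  have hLnorm : ‖L‖ ≤ 1 := by
    apply (ContinuousLinearMap.opNorm_smul_le _ _).trans
    have h1 : ‖ContinuousLinearMap.id ℝ (Ee n)‖ ≤ 1 := ContinuousLinearMap.norm_id_le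
    have h2 : ‖((2:ℝ) ^ m)⁻¹‖ ≤ 1 := by
      rw [norm_inv, norm_pow, Real.norm_ofNat, inv_le_one_iff₀]
      right; exact one_le_pow₀ one_le_two
    calc ‖((2:ℝ) ^ m)⁻¹‖ * ‖ContinuousLinearMap.id ℝ (Ee n)‖ ≤ 1 * 1 :=
          mul_le_mul h2 h1 (norm_nonneg _) zero_le_one
    _ = 1 := mul_one 1
  calc ‖iteratedFDeriv ℝ j (⇑(bf n)) (L x)‖ * ∏ _i : Fin j, ‖L‖
      ≤ C * ∏ _i : Fin j, (1:ℝ) := by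
        refine mul_le_mul (hC _) ?_ ?_ (le_trans (norm_nonneg _) (hC 0)) <;>
        · first
          | exact Finset.prod_le_prod (fun _ _ => norm_nonneg _) (fun _ _ => hLnorm)
          | exact Finset.prod_nonneg fun _ _ => norm_nonneg _
  _ = C := by simp
  _ ≤ max C 0 := le_max_left _ _

def sg (n : ℕ) : ℕ → Ee n → ℝ
  | 0 => th n 0
  | (m + 1) => th n (m + 1) - th n m

lemma sg_smooth (m : ℕ) : ContDiff ℝ ∞ (sg n m) := by
  cases m with
  | zero => exact th_smooth 0
  | succ m => exact (th_smooth (m + 1)).sub (th_smooth m)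

lemma sg_sum (N : ℕ) (x : Ee n) : ∑ m ∈ Finset.range (N + 1), sg n m x = th n N x := by
  induction N with
  | zero => simp [sg]
  | succ N ih => rw [Finset.sum_range_succ, ih]; simp [sg]

lemma sg_zero_of_norm_le {m : ℕ} {x : Ee n} (h : ‖x‖ ≤ 2 ^ m) : sg n (m + 1) x = 0 := by
  have hmono : (2:ℝ) ^ m ≤ 2 ^ (m + 1) := by
    have := pow_pos (show (0:ℝ) < 2 by norm_num) m
    rw [pow_succ]; nlinarith
  have h1 : th n (m + 1) x = 1 := th_one (h.trans hmono)
  have h2 : th n m x = 1 := th_one h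
  simp [sg, h1, h2]

lemma sg_zero_of_le_norm {m : ℕ} {x : Ee n} (h : 2 ^ (m + 1) ≤ ‖x‖) : sg n m x = 0 := by
  cases m with
  | zero => exact th_zero h
  | succ m =>
    have h1 : th n (m + 1) x = 0 := th_zero h
    have hmono : (2:ℝ) ^ (m + 1) ≤ 2 ^ (m + 1 + 1) := by
      have := pow_pos (show (0:ℝ) < 2 by norm_num) (m+1)
      rw [pow_succ (2:ℝ) (m+1)]; nlinarith
    have h2 : th n m x = 0 := th_zero (le_trans hmono h)
    simp [sg, h1, h2]

lemma iteratedFDeriv_sub_apply' {F : Type*} [NormedAddCommGroup F] [NormedSpace ℝ F]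
    {f g : Ee n → F} (hf : ContDiff ℝ ∞ f) (hg : ContDiff ℝ ∞ g) (j : ℕ) (x : Ee n) :
    iteratedFDeriv ℝ j (fun y => f y - g y) x =
      iteratedFDeriv ℝ j f x - iteratedFDeriv ℝ j g x := by
  have heq : (fun y => f y - g y) = f + (-g) := by
    funext y; simp [sub_eq_add_neg]
  have hgneg : ContDiff ℝ (j : ℕ∞) (-g) := (hg.of_le (mod_cast le_top)).neg
  rw [heq, iteratedFDeriv_add_apply (hf.of_le (mod_cast le_top)).contDiffAt hgneg.contDiffAt,
    iteratedFDeriv_neg_apply, sub_eq_add_neg]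

lemma sg_deriv_bound (j : ℕ) : ∃ B : ℝ, 0 ≤ B ∧
    ∀ (m : ℕ) (x : Ee n), ‖iteratedFDeriv ℝ j (sg n m) x‖ ≤ B := by
  obtain ⟨C, hC0, hC⟩ := th_deriv_bound (n := n) j
  refine ⟨2 * C, by positivity, fun m x => ?_⟩
  cases m with
  | zero => exact (hC 0 x).trans (by linarith)
  | succ m =>
    have : sg n (m + 1) = fun y => th n (m + 1) y - th n m y := rfl
    rw [this, iteratedFDeriv_sub_apply' (th_smooth _) (th_smooth _)]
    calc ‖iteratedFDeriv ℝ j (th n (m+1)) x - iteratedFDeriv ℝ j (th n m) x‖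
        ≤ ‖iteratedFDeriv ℝ j (th n (m+1)) x‖ + ‖iteratedFDeriv ℝ j (th n m) x‖ :=
          norm_sub_le _ _
    _ ≤ 2 * C := by have := hC (m+1) x; have := hC m x; linarith


lemma pow_arith {L : ℕ} {M : ℝ} (hML : M ≤ L) (m' : ℕ) :
    (((2:ℝ) ^ m') ^ L)⁻¹ ≤ 2 ^ L * (2:ℝ) ^ (-(M * ((m' : ℝ) + 1))) := by
  have h1 : (((2:ℝ) ^ m') ^ L)⁻¹ = (2:ℝ) ^ (-(((m' * L : ℕ)) : ℝ)) := by
    rw [← pow_mul, ← Real.rpow_natCast 2 (m' * L), ← Real.rpow_neg (by norm_num)]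
  have h2 : (2:ℝ) ^ L * (2:ℝ) ^ (-(M * ((m' : ℝ) + 1))) =
      (2:ℝ) ^ ((L : ℝ) + -(M * ((m' : ℝ) + 1))) := by
    rw [Real.rpow_add (by norm_num), Real.rpow_natCast]
  rw [h1, h2]
  apply Real.rpow_le_rpow_of_exponent_le one_le_two
  push_cast
  have hm' : (0:ℝ) ≤ (m' : ℝ) := Nat.cast_nonneg m'
  nlinarith

def gf (n : ℕ) (φ : 𝓢(Ee n, ℂ)) (m : ℕ) : Ee n → ℂ := fun x => sg n m x • φ x

variable {φ : 𝓢(Ee n, ℂ)}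

lemma gf_smooth (φ : 𝓢(Ee n, ℂ)) (m : ℕ) : ContDiff ℝ ∞ (gf n φ m) :=
  (sg_smooth m).smul φ.smooth'

lemma gf_zero_of_le_norm {m : ℕ} {x : Ee n} (h : 2 ^ (m + 1) ≤ ‖x‖) : gf n φ m x = 0 := by
  simp [gf, sg_zero_of_le_norm h]

lemma gf_hcs (φ : 𝓢(Ee n, ℂ)) (m : ℕ) : HasCompactSupport (gf n φ m) := by
  apply HasCompactSupport.intro (isCompact_closedBall (0 : Ee n) (2 ^ (m + 1)))
  intro x hx
  apply gf_zero_of_le_norm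
  simp only [mem_closedBall, dist_zero_right, not_le] at hx
  exact hx.le

lemma gf_deriv_zero (φ : 𝓢(Ee n, ℂ)) (j m : ℕ) {x : Ee n} (h : ‖x‖ < 2 ^ m) :
    iteratedFDeriv ℝ j (gf n φ (m + 1)) x = 0 := by
  have hsupp : tsupport (gf n φ (m + 1)) ⊆ {y : Ee n | 2 ^ m ≤ ‖y‖} := by
    apply closure_minimal
    · intro y hy
      by_contra hc
      simp only [Set.mem_setOf_eq, not_le] at hc
      exact hy (by simp [gf, sg_zero_of_norm_le hc.le])
    · exact isClosed_le continuous_const continuous_norm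
  by_contra hne
  have hx : x ∈ tsupport (gf n φ (m + 1)) :=
    support_iteratedFDeriv_subset j (Function.mem_support.mpr hne)
  have := hsupp hx
  simp only [Set.mem_setOf_eq] at this
  linarith

lemma gf_decay (φ : 𝓢(Ee n, ℂ)) (k j : ℕ) (M : ℝ) (hM : 0 ≤ M) :
    ∃ A : ℝ, 0 ≤ A ∧ ∀ (m : ℕ) (x : Ee n),
      ‖x‖ ^ k * ‖iteratedFDeriv ℝ j (gf n φ m) x‖ ≤ A * (2:ℝ) ^ (-(M * (m : ℝ))) := by
  set L := ⌈M⌉₊ with hLdef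
  have hML : M ≤ (L : ℝ) := Nat.le_ceil M
  choose B hB0 hB using fun i => sg_deriv_bound (n := n) i
  set A0 : ℝ := ∑ i ∈ Finset.range (j + 1),
    (j.choose i : ℝ) * B i * (SchwartzMap.seminorm ℝ k (j - i) φ) with hA0def
  set A1 : ℝ := (∑ i ∈ Finset.range (j + 1),
    (j.choose i : ℝ) * B i * (SchwartzMap.seminorm ℝ (k + L) (j - i) φ)) * 2 ^ L with hA1def
  have hA00 : 0 ≤ A0 := Finset.sum_nonneg fun i _ => by
    have h1 : (0:ℝ) ≤ SchwartzMap.seminorm ℝ (E := Ee n) (F := ℂ) k (j - i) φ :=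
      apply_nonneg _ φ
    have h2 := hB0 i
    positivity
  have hA10 : 0 ≤ A1 := by
    apply mul_nonneg _ (by positivity)
    exact Finset.sum_nonneg fun i _ => by
      have h1 : (0:ℝ) ≤ SchwartzMap.seminorm ℝ (E := Ee n) (F := ℂ) (k + L) (j - i) φ :=
        apply_nonneg _ φ
      have h2 := hB0 i
      positivity
  refine ⟨A0 + A1, by linarith, fun m x => ?_⟩
  have h2pos : (0:ℝ) < (2:ℝ) ^ (-(M * (m : ℝ))) := Real.rpow_pos_of_pos two_pos _
  have hLeib : ‖iteratedFDeriv ℝ j (gf n φ m) x‖ ≤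
      ∑ i ∈ Finset.range (j + 1), (j.choose i : ℝ) * ‖iteratedFDeriv ℝ i (sg n m) x‖ *
        ‖iteratedFDeriv ℝ (j - i) (⇑φ) x‖ :=
    norm_iteratedFDeriv_smul_le (sg_smooth m) φ.smooth' x (mod_cast le_top)
  have hxk0 : (0:ℝ) ≤ ‖x‖ ^ k := by positivity
  cases m with
  | zero =>
    have hone : (2:ℝ) ^ (-(M * ((0:ℕ) : ℝ))) = 1 := by norm_num
    rw [hone, mul_one]
    calc ‖x‖ ^ k * ‖iteratedFDeriv ℝ j (gf n φ 0) x‖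
        ≤ ‖x‖ ^ k * ∑ i ∈ Finset.range (j + 1), (j.choose i : ℝ) *
            ‖iteratedFDeriv ℝ i (sg n 0) x‖ * ‖iteratedFDeriv ℝ (j - i) (⇑φ) x‖ :=
          mul_le_mul_of_nonneg_left hLeib hxk0
    _ = ∑ i ∈ Finset.range (j + 1), (j.choose i : ℝ) * ‖iteratedFDeriv ℝ i (sg n 0) x‖ *
          (‖x‖ ^ k * ‖iteratedFDeriv ℝ (j - i) (⇑φ) x‖) := by
        rw [Finset.mul_sum]; exact Finset.sum_congr rfl fun i _ => by ring
    _ ≤ A0 := by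
        apply Finset.sum_le_sum
        intro i _
        have h1 : ‖x‖ ^ k * ‖iteratedFDeriv ℝ (j - i) (⇑φ) x‖ ≤
            SchwartzMap.seminorm ℝ k (j - i) φ := SchwartzMap.le_seminorm ℝ k (j - i) φ x
        have h2 := hB i 0 x
        have h3 : (0:ℝ) ≤ ‖x‖ ^ k * ‖iteratedFDeriv ℝ (j - i) (⇑φ) x‖ := by positivity
        have h4 : (0:ℝ) ≤ (j.choose i : ℝ) := by positivity
        have key : ‖iteratedFDeriv ℝ i (sg n 0) x‖ *
            (‖x‖ ^ k * ‖iteratedFDeriv ℝ (j - i) (⇑φ) x‖) ≤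
            B i * (SchwartzMap.seminorm ℝ k (j - i) φ) :=
          mul_le_mul h2 h1 h3 (hB0 i)
        calc (j.choose i : ℝ) * ‖iteratedFDeriv ℝ i (sg n 0) x‖ *
              (‖x‖ ^ k * ‖iteratedFDeriv ℝ (j - i) (⇑φ) x‖)
            = (j.choose i : ℝ) * (‖iteratedFDeriv ℝ i (sg n 0) x‖ *
              (‖x‖ ^ k * ‖iteratedFDeriv ℝ (j - i) (⇑φ) x‖)) := by ring
        _ ≤ (j.choose i : ℝ) * (B i * (SchwartzMap.seminorm ℝ k (j - i) φ)) :=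
            mul_le_mul_of_nonneg_left key h4
        _ = (j.choose i : ℝ) * B i * (SchwartzMap.seminorm ℝ k (j - i) φ) := by ring
    _ ≤ A0 + A1 := by linarith
  | succ m' =>
    by_cases hx : ‖x‖ < 2 ^ m'
    · rw [gf_deriv_zero φ j m' hx, norm_zero, mul_zero]
      positivity
    · push_neg at hx
      have hxpos : (0:ℝ) < ‖x‖ := lt_of_lt_of_le (by positivity) hx
      have hxk : ‖x‖ ^ k ≤ (((2:ℝ) ^ m') ^ L)⁻¹ * ‖x‖ ^ (k + L) := by
        rw [inv_mul_eq_div, le_div_iff₀ (by positivity)]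
        calc ‖x‖ ^ k * ((2:ℝ) ^ m') ^ L ≤ ‖x‖ ^ k * ‖x‖ ^ L := by
              apply mul_le_mul_of_nonneg_left _ hxk0
              exact pow_le_pow_left₀ (by positivity) hx L
        _ = ‖x‖ ^ (k + L) := (pow_add _ _ _).symm
      have hpow : (((2:ℝ) ^ m') ^ L)⁻¹ ≤ 2 ^ L * (2:ℝ) ^ (-(M * ((m' : ℝ) + 1))) :=
        pow_arith hML m'
      have hcast : ((m' + 1 : ℕ) : ℝ) = (m' : ℝ) + 1 := by push_cast; ring
      rw [hcast]
      have h2pos' : (0:ℝ) < (2:ℝ) ^ (-(M * ((m' : ℝ) + 1))) := Real.rpow_pos_of_pos two_pos _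
      calc ‖x‖ ^ k * ‖iteratedFDeriv ℝ j (gf n φ (m' + 1)) x‖
          ≤ ‖x‖ ^ k * ∑ i ∈ Finset.range (j + 1), (j.choose i : ℝ) *
              ‖iteratedFDeriv ℝ i (sg n (m' + 1)) x‖ * ‖iteratedFDeriv ℝ (j - i) (⇑φ) x‖ :=
            mul_le_mul_of_nonneg_left hLeib hxk0
      _ = ∑ i ∈ Finset.range (j + 1), (j.choose i : ℝ) *
            ‖iteratedFDeriv ℝ i (sg n (m' + 1)) x‖ *
            (‖x‖ ^ k * ‖iteratedFDeriv ℝ (j - i) (⇑φ) x‖) := by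
          rw [Finset.mul_sum]; exact Finset.sum_congr rfl fun i _ => by ring
      _ ≤ ∑ i ∈ Finset.range (j + 1), (j.choose i : ℝ) * B i *
            (SchwartzMap.seminorm ℝ (k + L) (j - i) φ) *
            (2 ^ L * (2:ℝ) ^ (-(M * ((m' : ℝ) + 1)))) := by
          apply Finset.sum_le_sum
          intro i _
          have hsem : ‖x‖ ^ (k + L) * ‖iteratedFDeriv ℝ (j - i) (⇑φ) x‖ ≤
              SchwartzMap.seminorm ℝ (k + L) (j - i) φ :=
            SchwartzMap.le_seminorm ℝ (k + L) (j - i) φ x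
          have hφ0 : (0:ℝ) ≤ ‖iteratedFDeriv ℝ (j - i) (⇑φ) x‖ := norm_nonneg _
          have hstep : ‖x‖ ^ k * ‖iteratedFDeriv ℝ (j - i) (⇑φ) x‖ ≤
              (2 ^ L * (2:ℝ) ^ (-(M * ((m' : ℝ) + 1)))) *
                (SchwartzMap.seminorm ℝ (k + L) (j - i) φ) := by
            calc ‖x‖ ^ k * ‖iteratedFDeriv ℝ (j - i) (⇑φ) x‖
                ≤ ((((2:ℝ) ^ m') ^ L)⁻¹ * ‖x‖ ^ (k + L)) *
                  ‖iteratedFDeriv ℝ (j - i) (⇑φ) x‖ :=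
                mul_le_mul_of_nonneg_right hxk hφ0
            _ = (((2:ℝ) ^ m') ^ L)⁻¹ * (‖x‖ ^ (k + L) * ‖iteratedFDeriv ℝ (j - i) (⇑φ) x‖) := by
                ring
            _ ≤ (2 ^ L * (2:ℝ) ^ (-(M * ((m' : ℝ) + 1)))) *
                  (SchwartzMap.seminorm ℝ (k + L) (j - i) φ) := by
                apply mul_le_mul hpow hsem (by positivity) (by positivity)
          have h2 := hB i (m' + 1) x
          have h4 : (0:ℝ) ≤ (j.choose i : ℝ) := by positivity
          have h3 : (0:ℝ) ≤ ‖x‖ ^ k * ‖iteratedFDeriv ℝ (j - i) (⇑φ) x‖ := by positivity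
          have key : ‖iteratedFDeriv ℝ i (sg n (m' + 1)) x‖ *
              (‖x‖ ^ k * ‖iteratedFDeriv ℝ (j - i) (⇑φ) x‖) ≤
              B i * ((2 ^ L * (2:ℝ) ^ (-(M * ((m' : ℝ) + 1)))) *
                (SchwartzMap.seminorm ℝ (k + L) (j - i) φ)) :=
            mul_le_mul h2 hstep h3 (hB0 i)
          calc (j.choose i : ℝ) * ‖iteratedFDeriv ℝ i (sg n (m' + 1)) x‖ *
                (‖x‖ ^ k * ‖iteratedFDeriv ℝ (j - i) (⇑φ) x‖)
              = (j.choose i : ℝ) * (‖iteratedFDeriv ℝ i (sg n (m' + 1)) x‖ *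
                (‖x‖ ^ k * ‖iteratedFDeriv ℝ (j - i) (⇑φ) x‖)) := by ring
          _ ≤ (j.choose i : ℝ) * (B i * ((2 ^ L * (2:ℝ) ^ (-(M * ((m' : ℝ) + 1)))) *
                (SchwartzMap.seminorm ℝ (k + L) (j - i) φ))) :=
              mul_le_mul_of_nonneg_left key h4
          _ = (j.choose i : ℝ) * B i * (SchwartzMap.seminorm ℝ (k + L) (j - i) φ) *
                (2 ^ L * (2:ℝ) ^ (-(M * ((m' : ℝ) + 1)))) := by ring
      _ = A1 * (2:ℝ) ^ (-(M * ((m' : ℝ) + 1))) := by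
          rw [hA1def, ← Finset.sum_mul]
          ring
      _ ≤ (A0 + A1) * (2:ℝ) ^ (-(M * ((m' : ℝ) + 1))) := by
          apply mul_le_mul_of_nonneg_right _ h2pos'.le
          linarith


/-! ### The normalized bump `W` -/

def Wfun (n : ℕ) : Ee n → ℂ := fun x => (((∫ y : Ee n, bf n y)⁻¹ * bf n x : ℝ) : ℂ)

lemma Wfun_smooth : ContDiff ℝ ∞ (Wfun n) :=
  Complex.ofRealCLM.contDiff.comp (contDiff_const.mul (bf n).contDiff)

lemma Wfun_zero {x : Ee n} (h : 2 ≤ ‖x‖) : Wfun n x = 0 := by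
  have h0 : bf n x = 0 := by
    apply ContDiffBump.zero_of_le_dist
    rw [dist_zero_right, show (bf n).rOut = 2 from rfl]
    exact h
  simp [Wfun, h0]

lemma Wfun_hcs : HasCompactSupport (Wfun n) := by
  apply HasCompactSupport.intro (isCompact_closedBall (0 : Ee n) 2)
  intro x hx
  apply Wfun_zero
  simp only [mem_closedBall, dist_zero_right, not_le] at hx
  exact hx.le

lemma Wfun_integral : ∫ x, Wfun n x = 1 := by
  have : ∫ x, Wfun n x =
      ((∫ x : Ee n, (∫ y : Ee n, bf n y)⁻¹ * bf n x : ℝ) : ℂ) := integral_ofReal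
  rw [this, MeasureTheory.integral_const_mul, inv_mul_cancel₀ (bf n).integral_pos.ne']
  norm_num

def WS (n : ℕ) : 𝓢(Ee n, ℂ) := toSchwartz (Wfun n) Wfun_smooth Wfun_hcs

/-! ### The pieces `ψ_m` -/

def cm (n : ℕ) (φ : 𝓢(Ee n, ℂ)) (m : ℕ) : ℂ := ∫ x, gf n φ m x

def psifun (n : ℕ) (φ : 𝓢(Ee n, ℂ)) (m : ℕ) : Ee n → ℂ :=
  fun x => gf n φ m x - cm n φ m • Wfun n x

lemma psifun_smooth (φ : 𝓢(Ee n, ℂ)) (m : ℕ) : ContDiff ℝ ∞ (psifun n φ m) :=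
  (gf_smooth φ m).sub (Wfun_smooth.const_smul (cm n φ m))

lemma two_le_pow_succ (m : ℕ) : (2:ℝ) ≤ 2 ^ (m + 1) := by
  calc (2:ℝ) = 2 ^ 1 := (pow_one 2).symm
  _ ≤ 2 ^ (m + 1) := pow_le_pow_right₀ one_le_two (by omega)

lemma psifun_zero_of_le_norm {φ : 𝓢(Ee n, ℂ)} {m : ℕ} {x : Ee n}
    (h : 2 ^ (m + 1) ≤ ‖x‖) : psifun n φ m x = 0 := by
  rw [psifun, gf_zero_of_le_norm h, Wfun_zero (le_trans (two_le_pow_succ m) h)]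
  simp

lemma psifun_hcs (φ : 𝓢(Ee n, ℂ)) (m : ℕ) : HasCompactSupport (psifun n φ m) := by
  apply HasCompactSupport.intro (isCompact_closedBall (0 : Ee n) (2 ^ (m + 1)))
  intro x hx
  apply psifun_zero_of_le_norm
  simp only [mem_closedBall, dist_zero_right, not_le] at hx
  exact hx.le

def Psi (n : ℕ) (φ : 𝓢(Ee n, ℂ)) (m : ℕ) : 𝓢(Ee n, ℂ) :=
  toSchwartz (psifun n φ m) (psifun_smooth φ m) (psifun_hcs φ m)

lemma gf_integrable (φ : 𝓢(Ee n, ℂ)) (m : ℕ) : Integrable (gf n φ m) volume :=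
  (gf_smooth φ m).continuous.integrable_of_hasCompactSupport (gf_hcs φ m)

lemma Wfun_integrable : Integrable (Wfun n) volume :=
  Wfun_smooth.continuous.integrable_of_hasCompactSupport Wfun_hcs

lemma psifun_integral_zero (φ : 𝓢(Ee n, ℂ)) (m : ℕ) : ∫ x, psifun n φ m x = 0 := by
  have : ∀ x, psifun n φ m x = gf n φ m x - cm n φ m • Wfun n x := fun x => rfl
  have hint2 : Integrable (fun x : Ee n => cm n φ m • Wfun n x) volume :=
    Wfun_integrable.smul (cm n φ m)
  rw [integral_congr_ae (ae_of_all _ this),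
    integral_sub (gf_integrable φ m) hint2,
    integral_smul, Wfun_integral, smul_eq_mul, mul_one, cm, sub_self]

/-! ### decay of `cm` -/

lemma cm_decay (φ : 𝓢(Ee n, ℂ)) (M : ℝ) (hM : 0 ≤ M) :
    ∃ A : ℝ, 0 ≤ A ∧ ∀ m : ℕ, ‖cm n φ m‖ ≤ A * (2:ℝ) ^ (-(M * (m : ℝ))) := by
  set K := n + 1 with hK
  choose A hA0 hA using fun k => gf_decay φ k 0 M hM
  set A' : ℝ := ∑ k ∈ Finset.range (K + 1), (K.choose k : ℝ) * A k with hA'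
  have hA'0 : 0 ≤ A' := Finset.sum_nonneg fun k _ => by have := hA0 k; positivity
  have hint : Integrable (fun x : Ee n => ((1 + ‖x‖) ^ K)⁻¹) volume := by
    have h1 : Integrable (fun x : Ee n => (1 + ‖x‖) ^ (-(K : ℝ))) volume := by
      apply integrable_one_add_norm
      rw [finrank_euclideanSpace_fin]
      exact_mod_cast Nat.lt_succ_self n
    apply h1.congr
    filter_upwards with x
    rw [Real.rpow_neg (by positivity), Real.rpow_natCast]
  set I : ℝ := ∫ x : Ee n, ((1 + ‖x‖) ^ K)⁻¹ with hI
  have hI0 : 0 ≤ I := integral_nonneg fun x => by positivity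
  refine ⟨A' * I, by positivity, fun m => ?_⟩
  have h2pos : (0:ℝ) < (2:ℝ) ^ (-(M * (m : ℝ))) := Real.rpow_pos_of_pos two_pos _
  have hpt : ∀ x : Ee n, ‖gf n φ m x‖ ≤
      (A' * (2:ℝ) ^ (-(M * (m : ℝ)))) * ((1 + ‖x‖) ^ K)⁻¹ := by
    intro x
    have hKpos : (0:ℝ) < (1 + ‖x‖) ^ K := by positivity
    have h1 : ‖gf n φ m x‖ * (1 + ‖x‖) ^ K ≤ A' * (2:ℝ) ^ (-(M * (m : ℝ))) := by
      have hexp : (1 + ‖x‖) ^ K =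
          ∑ k ∈ Finset.range (K + 1), ‖x‖ ^ k * (1:ℝ) ^ (K - k) * (K.choose k : ℝ) := by
        rw [add_comm]
        exact add_pow ‖x‖ 1 K
      rw [hexp, Finset.mul_sum, hA', Finset.sum_mul]
      apply Finset.sum_le_sum
      intro k _
      have hd := hA k m x
      rw [norm_iteratedFDeriv_zero] at hd
      calc ‖gf n φ m x‖ * (‖x‖ ^ k * (1:ℝ) ^ (K - k) * (K.choose k : ℝ))
          = (K.choose k : ℝ) * (‖x‖ ^ k * ‖gf n φ m x‖) := by
            rw [one_pow]; ring
      _ ≤ (K.choose k : ℝ) * (A k * (2:ℝ) ^ (-(M * (m : ℝ)))) :=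
            mul_le_mul_of_nonneg_left hd (by positivity)
      _ = (K.choose k : ℝ) * A k * (2:ℝ) ^ (-(M * (m : ℝ))) := by ring
    have := (le_div_iff₀ hKpos).mpr h1
    rwa [div_eq_mul_inv] at this
  calc ‖cm n φ m‖ ≤ ∫ x, ‖gf n φ m x‖ := norm_integral_le_integral_norm _
  _ ≤ ∫ x : Ee n, (A' * (2:ℝ) ^ (-(M * (m : ℝ)))) * ((1 + ‖x‖) ^ K)⁻¹ :=
      integral_mono (gf_integrable φ m).norm (hint.const_mul _) hpt
  _ = A' * I * (2:ℝ) ^ (-(M * (m : ℝ))) := by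
      rw [MeasureTheory.integral_const_mul]
      ring

/-! ### seminorm decay of `Psi` -/

lemma Psi_sem_decay (φ : 𝓢(Ee n, ℂ)) (k j : ℕ) (M : ℝ) (hM : 0 ≤ M) :
    ∃ A : ℝ, 0 ≤ A ∧ ∀ m : ℕ,
      SchwartzMap.seminorm ℝ k j (Psi n φ m) ≤ A * (2:ℝ) ^ (-(M * (m : ℝ))) := by
  obtain ⟨A1, hA10, hA1⟩ := gf_decay φ k j M hM
  obtain ⟨A2, hA20, hA2⟩ := cm_decay φ M hM
  set SW : ℝ := SchwartzMap.seminorm ℝ (E := Ee n) (F := ℂ) k j (WS n) with hSW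
  have hSW0 : 0 ≤ SW := apply_nonneg _ _
  refine ⟨A1 + A2 * SW, by positivity, fun m => ?_⟩
  have h2pos : (0:ℝ) < (2:ℝ) ^ (-(M * (m : ℝ))) := Real.rpow_pos_of_pos two_pos _
  apply SchwartzMap.seminorm_le_bound ℝ k j _ (by positivity)
  intro x
  have hco : ⇑(Psi n φ m) = fun y => gf n φ m y - cm n φ m • Wfun n y := rfl
  rw [hco, iteratedFDeriv_sub_apply' (gf_smooth φ m) (Wfun_smooth.const_smul (cm n φ m)) j x]
  have hWsm : ContDiff ℝ (j : ℕ∞) (Wfun n) := Wfun_smooth.of_le (mod_cast le_top)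
  have hsmul : iteratedFDeriv ℝ j (fun y => cm n φ m • Wfun n y) x =
      cm n φ m • iteratedFDeriv ℝ j (Wfun n) x := iteratedFDeriv_const_smul_apply' hWsm.contDiffAt
  rw [hsmul]
  have hnorm : ‖iteratedFDeriv ℝ j (gf n φ m) x - cm n φ m • iteratedFDeriv ℝ j (Wfun n) x‖ ≤
      ‖iteratedFDeriv ℝ j (gf n φ m) x‖ + ‖cm n φ m‖ * ‖iteratedFDeriv ℝ j (Wfun n) x‖ := by
    apply (norm_sub_le _ _).trans
    rw [norm_smul]
  have hW : ‖x‖ ^ k * ‖iteratedFDeriv ℝ j (Wfun n) x‖ ≤ SW :=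
    SchwartzMap.le_seminorm ℝ k j (WS n) x
  have hxk0 : (0:ℝ) ≤ ‖x‖ ^ k := by positivity
  calc ‖x‖ ^ k * ‖iteratedFDeriv ℝ j (gf n φ m) x -
        cm n φ m • iteratedFDeriv ℝ j (Wfun n) x‖
      ≤ ‖x‖ ^ k * (‖iteratedFDeriv ℝ j (gf n φ m) x‖ +
          ‖cm n φ m‖ * ‖iteratedFDeriv ℝ j (Wfun n) x‖) :=
        mul_le_mul_of_nonneg_left hnorm hxk0
  _ = ‖x‖ ^ k * ‖iteratedFDeriv ℝ j (gf n φ m) x‖ +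
        ‖cm n φ m‖ * (‖x‖ ^ k * ‖iteratedFDeriv ℝ j (Wfun n) x‖) := by ring
  _ ≤ A1 * (2:ℝ) ^ (-(M * (m : ℝ))) + (A2 * (2:ℝ) ^ (-(M * (m : ℝ)))) * SW := by
      apply add_le_add (hA1 m x)
      apply mul_le_mul (hA2 m) hW (by positivity) (by positivity)
  _ = (A1 + A2 * SW) * (2:ℝ) ^ (-(M * (m : ℝ))) := by ring


/-! ### `eLpNorm` bound by seminorms -/

lemma eLp_bound (p : ℝ≥0∞) (hp : 1 ≤ p) :
    ∃ c : ℝ, 0 ≤ c ∧ ∀ g : 𝓢(Ee n, ℂ), eLpNorm (⇑g) p volume ≤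
      ENNReal.ofReal (c * ((Finset.Iic (n + 1, 0)).sup
        (schwartzSeminormFamily ℝ (Ee n) ℂ)) g) := by
  set K := n + 1 with hK
  set w : Ee n → ℝ := fun x => ((1 + ‖x‖) ^ K)⁻¹ with hw
  have hwm : ∀ x : Ee n, ‖w x‖ ≤ 1 := by
    intro x
    rw [hw, Real.norm_eq_abs, abs_of_nonneg (by positivity)]
    rw [inv_le_one_iff₀]
    right
    calc (1:ℝ) = 1 ^ K := (one_pow K).symm
    _ ≤ (1 + ‖x‖) ^ K := pow_le_pow_left₀ (by norm_num) (by linarith [norm_nonneg x]) K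
  have hwcont : Continuous w :=
    ((continuous_const.add continuous_norm).pow K).inv₀ (fun x => (by positivity : (1 + ‖x‖) ^ K ≠ 0))
  have hwmeas : AEStronglyMeasurable w volume := hwcont.aestronglyMeasurable
  have hwfin : eLpNorm w p volume < ⊤ := by
    rcases eq_or_ne p ⊤ with rfl | hptop
    · rw [eLpNorm_exponent_top]
      exact eLpNormEssSup_lt_top_of_ae_bound (C := 1) (ae_of_all _ hwm)
    · have hp0 : p ≠ 0 := by
        intro h; rw [h] at hp; simp at hp
      rw [eLpNorm_lt_top_iff_lintegral_rpow_enorm_lt_top hp0 hptop]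
      have hint : Integrable w volume := by
        have h1 : Integrable (fun x : Ee n => (1 + ‖x‖) ^ (-(K : ℝ))) volume := by
          apply integrable_one_add_norm
          rw [finrank_euclideanSpace_fin]
          exact_mod_cast Nat.lt_succ_self n
        apply h1.congr
        filter_upwards with x
        rw [Real.rpow_neg (by positivity), Real.rpow_natCast]
      have h1le : (1:ℝ) ≤ p.toReal := by
        have := ENNReal.toReal_mono hptop hp
        simpa using this
      calc ∫⁻ x, (‖w x‖₊ : ℝ≥0∞) ^ p.toReal ≤ ∫⁻ x, (‖w x‖₊ : ℝ≥0∞) := by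
            apply lintegral_mono
            intro x
            have hx1 : (‖w x‖₊ : ℝ≥0∞) ≤ 1 := by
              change ‖w x‖ₑ ≤ 1; rw [← ofReal_norm_eq_enorm]
              calc ENNReal.ofReal ‖w x‖ ≤ ENNReal.ofReal 1 :=
                    ENNReal.ofReal_le_ofReal (hwm x)
              _ = 1 := ENNReal.ofReal_one
            calc (‖w x‖₊ : ℝ≥0∞) ^ p.toReal ≤ (‖w x‖₊ : ℝ≥0∞) ^ (1:ℝ) :=
                  ENNReal.rpow_le_rpow_of_exponent_ge hx1 h1le
            _ = (‖w x‖₊ : ℝ≥0∞) := ENNReal.rpow_one _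
      _ < ⊤ := hint.2
  set cw : ℝ := (eLpNorm w p volume).toReal with hcw
  have hcw0 : 0 ≤ cw := ENNReal.toReal_nonneg
  refine ⟨2 ^ K * cw, by positivity, fun g => ?_⟩
  set S : ℝ := ((Finset.Iic (K, 0)).sup (schwartzSeminormFamily ℝ (Ee n) ℂ)) g with hS
  have hS0 : 0 ≤ S := apply_nonneg _ _
  have hgx : ∀ x : Ee n, ‖g x‖ ≤ ‖(2 ^ K * S) • w x‖ := by
    intro x
    have h1 := SchwartzMap.one_add_le_sup_seminorm_apply (𝕜 := ℝ) (m := (K, 0))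
      (k := K) (n := 0) le_rfl le_rfl g x
    rw [norm_iteratedFDeriv_zero] at h1
    have hKpos : (0:ℝ) < (1 + ‖x‖) ^ K := by positivity
    have h1' : (1 + ‖x‖) ^ K * ‖g x‖ ≤ 2 ^ K * S := h1
    have h2 : ‖g x‖ ≤ (2 ^ K * S) * ((1 + ‖x‖) ^ K)⁻¹ := by
      rw [mul_comm] at h1'
      have h3 := (le_div_iff₀ hKpos).mpr h1'
      rwa [div_eq_mul_inv] at h3
    calc ‖g x‖ ≤ (2 ^ K * S) * ((1 + ‖x‖) ^ K)⁻¹ := h2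
    _ = (2 ^ K * S) * w x := rfl
    _ ≤ ‖(2 ^ K * S) • w x‖ := le_abs_self _
  calc eLpNorm (⇑g) p volume ≤ eLpNorm (fun x => (2 ^ K * S) • w x) p volume :=
        eLpNorm_mono hgx
  _ = eLpNorm ((2 ^ K * S) • w) p volume := rfl
  _ = ‖(2 ^ K * S : ℝ)‖₊ • eLpNorm w p volume := eLpNorm_const_smul _ _ _ _
  _ ≤ ENNReal.ofReal (2 ^ K * cw * S) := by
      rw [ENNReal.smul_def, smul_eq_mul]
      have he1 : (‖(2 ^ K * S : ℝ)‖₊ : ℝ≥0∞) = ENNReal.ofReal (2 ^ K * S) := by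
        rw [← Real.enorm_eq_ofReal (by positivity)]; rfl
      have he2 : eLpNorm w p volume = ENNReal.ofReal cw :=
        (ENNReal.ofReal_toReal hwfin.ne).symm
      rw [he1, he2, ← ENNReal.ofReal_mul (by positivity)]
      apply ENNReal.ofReal_le_ofReal
      apply le_of_eq
      ring

/-! ### Fourier transform seminorm bound -/

lemma FT_sem_bound (i : ℕ × ℕ) : ∃ s : Finset (ℕ × ℕ), ∃ C : ℝ, 0 ≤ C ∧
    ∀ f : 𝓢(Ee n, ℂ), schwartzSeminormFamily ℝ (Ee n) ℂ i
        ((SchwartzMap.fourierTransformCLM ℝ) f) ≤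
      C * ((s.sup (schwartzSeminormFamily ℝ (Ee n) ℂ)) f) := by
  set T := (SchwartzMap.fourierTransformCLM ℝ (V := Ee n) (E := ℂ)) with hT
  set q : Seminorm ℝ 𝓢(Ee n, ℂ) :=
    (schwartzSeminormFamily ℝ (Ee n) ℂ i).comp (T : 𝓢(Ee n, ℂ) →ₗ[ℝ] 𝓢(Ee n, ℂ)) with hq
  have hqc : Continuous q := by
    have : ⇑q = ⇑(schwartzSeminormFamily ℝ (Ee n) ℂ i) ∘ ⇑T := rfl
    rw [this]
    exact ((schwartz_withSeminorms ℝ (Ee n) ℂ).continuous_seminorm i).comp T.continuous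
  obtain ⟨s, C, hC, h⟩ :=
    Seminorm.bound_of_continuous (schwartz_withSeminorms ℝ (Ee n) ℂ) q hqc
  refine ⟨s, C, C.coe_nonneg, fun f => ?_⟩
  have := Seminorm.le_def.mp h f
  simpa [hq, Seminorm.comp_apply, NNReal.smul_def, smul_eq_mul] using this

/-! ### combining decays over a finite set of seminorms -/

lemma sup_sem_decay (s : Finset (ℕ × ℕ)) (F : ℕ → 𝓢(Ee n, ℂ)) (M : ℝ)
    (h : ∀ i : ℕ × ℕ, ∃ A : ℝ, 0 ≤ A ∧ ∀ m : ℕ,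
      schwartzSeminormFamily ℝ (Ee n) ℂ i (F m) ≤ A * (2:ℝ) ^ (-(M * (m : ℝ)))) :
    ∃ A : ℝ, 0 ≤ A ∧ ∀ m : ℕ,
      (s.sup (schwartzSeminormFamily ℝ (Ee n) ℂ)) (F m) ≤ A * (2:ℝ) ^ (-(M * (m : ℝ))) := by
  choose A hA0 hA using h
  have hsum0 : 0 ≤ ∑ i ∈ s, A i := Finset.sum_nonneg fun i _ => hA0 i
  refine ⟨∑ i ∈ s, A i, hsum0, fun m => ?_⟩
  have h2pos : (0:ℝ) < (2:ℝ) ^ (-(M * (m : ℝ))) := Real.rpow_pos_of_pos two_pos _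
  apply Seminorm.finset_sup_apply_le (mul_nonneg hsum0 h2pos.le)
  intro i hi
  calc schwartzSeminormFamily ℝ (Ee n) ℂ i (F m) ≤ A i * (2:ℝ) ^ (-(M * (m : ℝ))) := hA i m
  _ ≤ (∑ i ∈ s, A i) * (2:ℝ) ^ (-(M * (m : ℝ))) :=
      mul_le_mul_of_nonneg_right (Finset.single_le_sum (fun i _ => hA0 i) hi) h2pos.le

end SDhelp

open SDhelp

/-- decomposition lemma. A Schwartz function `φ` with vanishing integral can be
written as `φ = Σ_{m≥0} ψ_m` with `ψ_m ∈ C_c^∞`, `supp ψ_m ⊆ {ρ(x) ≤ C 2^{αm}}`,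
`∫ ψ_m = 0`, and for every `p ∈ [1,∞]`, `M > 0`, the norms `‖ψ_m‖_{L^p}` and
`‖ψ̂_m‖_{L^p}` are `O(2^{−mM})`. -/
theorem schwartz_decomposition
    (n : ℕ) (hn : 2 ≤ n) (α : Fin n → ℝ) (hα : ∀ i, 1 ≤ α i)
    (hα1 : α ⟨0, by omega⟩ = 1)
    (ρ : EuclideanSpace ℝ (Fin n) → ℝ) (hρ0 : ρ 0 = 0)
    (hρ : ∀ x : EuclideanSpace ℝ (Fin n), x ≠ 0 →
      0 < ρ x ∧ ∑ i, (x i) ^ 2 * (ρ x) ^ (-(2 * α i)) = 1)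
    (φ : SchwartzMap (EuclideanSpace ℝ (Fin n)) ℂ) (hφ : ∫ x, φ x = 0) :
    ∃ C > (0:ℝ), ∃ a > (0:ℝ), ∃ ψ : ℕ → EuclideanSpace ℝ (Fin n) → ℂ,
      (∀ x, HasSum (fun m => ψ m x) (φ x)) ∧
      (∀ m, ContDiff ℝ (⊤ : ℕ∞) (ψ m) ∧ HasCompactSupport (ψ m) ∧
        Function.support (ψ m) ⊆ {x | ρ x ≤ C * (2:ℝ) ^ (a * m)} ∧
        ∫ x, ψ m x = 0) ∧
      (∀ p : ENNReal, 1 ≤ p → ∀ M > (0:ℝ), ∃ CpM : ℝ, ∀ m,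
        eLpNorm (ψ m) p volume ≤ ENNReal.ofReal (CpM * (2:ℝ) ^ (-(M * m))) ∧
        eLpNorm (FourierTransform.fourier (ψ m)) p volume ≤
          ENNReal.ofReal (CpM * (2:ℝ) ^ (-(M * m)))) := by
  classical
  refine ⟨2, by norm_num, 1, by norm_num, fun m => ⇑(Psi n φ m), ?_, ?_, ?_⟩
  · -- (i) HasSum
    intro x
    obtain ⟨A, hA0, hA⟩ := Psi_sem_decay (n := n) φ 0 0 1 zero_le_one
    have hgeom : Summable (fun m : ℕ => A * (2:ℝ) ^ (-(1 * (m:ℝ)))) := by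
      have heq : (fun m : ℕ => A * (2:ℝ) ^ (-(1 * (m:ℝ)))) =
          fun m : ℕ => A * (2⁻¹ : ℝ) ^ m := by
        funext m
        congr 1
        rw [one_mul, Real.rpow_neg (by norm_num : (0:ℝ) ≤ 2), Real.rpow_natCast, ← inv_pow]
      rw [heq]
      exact (summable_geometric_of_lt_one (by norm_num) (by norm_num)).mul_left A
    have hb : ∀ m : ℕ, ‖(Psi n φ m) x‖ ≤ A * (2:ℝ) ^ (-(1 * (m:ℝ))) := by
      intro m
      calc ‖(Psi n φ m) x‖ ≤ SchwartzMap.seminorm ℝ 0 0 (Psi n φ m) :=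
            SchwartzMap.norm_le_seminorm ℝ (Psi n φ m) x
      _ ≤ A * (2:ℝ) ^ (-(1 * (m:ℝ))) := hA m
    have hsum : Summable fun m => (Psi n φ m) x := Summable.of_norm_bounded hgeom hb
    have hhs : HasSum (fun m => (Psi n φ m) x) (∑' m, (Psi n φ m) x) := hsum.hasSum
    have hplus : ∀ N : ℕ, ∑ m ∈ Finset.range (N + 1), (Psi n φ m) x =
        th n N x • φ x - (∫ y, th n N y • φ y) * Wfun n x := by
      intro N
      have h1 : ∀ m, (Psi n φ m) x = gf n φ m x - cm n φ m • Wfun n x := fun m => rfl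
      calc ∑ m ∈ Finset.range (N + 1), (Psi n φ m) x
          = ∑ m ∈ Finset.range (N + 1), (gf n φ m x - cm n φ m • Wfun n x) :=
            Finset.sum_congr rfl fun m _ => h1 m
      _ = (∑ m ∈ Finset.range (N + 1), gf n φ m x) -
            ∑ m ∈ Finset.range (N + 1), cm n φ m • Wfun n x := Finset.sum_sub_distrib _ _
      _ = th n N x • φ x - (∫ y, th n N y • φ y) * Wfun n x := by
          congr 1
          · have h2 : ∑ m ∈ Finset.range (N + 1), gf n φ m x =
                (∑ m ∈ Finset.range (N + 1), sg n m x) • φ x := by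
              rw [Finset.sum_smul]
              rfl
            rw [h2, sg_sum]
          · rw [← Finset.sum_smul]
            have h3 : ∑ m ∈ Finset.range (N + 1), cm n φ m = ∫ y, th n N y • φ y := by
              have h4 : ∀ m ∈ Finset.range (N + 1), Integrable (gf n φ m) volume :=
                fun m _ => gf_integrable φ m
              calc ∑ m ∈ Finset.range (N + 1), cm n φ m
                  = ∫ y, ∑ m ∈ Finset.range (N + 1), gf n φ m y :=
                    (integral_finset_sum _ h4).symm
              _ = ∫ y, th n N y • φ y := by
                  congr 1
                  funext y
                  calc ∑ m ∈ Finset.range (N + 1), gf n φ m y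
                      = (∑ m ∈ Finset.range (N + 1), sg n m y) • φ y := by
                        rw [Finset.sum_smul]; rfl
                  _ = th n N y • φ y := by rw [sg_sum]
            rw [h3, smul_eq_mul]
    have htendA : Tendsto (fun N => th n N x • φ x) atTop (𝓝 (φ x)) := by
      obtain ⟨N₀, hN₀⟩ := pow_unbounded_of_one_lt ‖x‖ (one_lt_two (α := ℝ))
      apply tendsto_atTop_of_eventually_const (i₀ := N₀)
      intro N hN
      rw [th_one (hN₀.le.trans (pow_le_pow_right₀ one_le_two hN)), one_smul]
    have htendB : Tendsto (fun N => ∫ y, th n N y • φ y) atTop (𝓝 (0 : ℂ)) := by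
      have h0 : (𝓝 (0 : ℂ)) = 𝓝 (∫ y, φ y) := by rw [hφ]
      rw [h0]
      apply MeasureTheory.tendsto_integral_of_dominated_convergence
        (bound := fun y => ‖φ y‖)
      · intro N
        exact ((th_smooth N).continuous.smul φ.continuous).aestronglyMeasurable
      · exact φ.integrable.norm
      · intro N
        filter_upwards with y
        rw [norm_smul, Real.norm_eq_abs, abs_of_nonneg (th_nonneg N y)]
        calc th n N y * ‖φ y‖ ≤ 1 * ‖φ y‖ :=
              mul_le_mul_of_nonneg_right (th_le_one N y) (norm_nonneg _)
        _ = ‖φ y‖ := one_mul _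
      · filter_upwards with y
        obtain ⟨N₀, hN₀⟩ := pow_unbounded_of_one_lt ‖y‖ (one_lt_two (α := ℝ))
        apply tendsto_atTop_of_eventually_const (i₀ := N₀)
        intro N hN
        rw [th_one (hN₀.le.trans (pow_le_pow_right₀ one_le_two hN)), one_smul]
    have htend : Tendsto (fun N => ∑ m ∈ Finset.range (N + 1), (Psi n φ m) x) atTop
        (𝓝 (φ x)) := by
      have h5 := htendA.sub (htendB.mul_const (Wfun n x))
      rw [zero_mul, sub_zero] at h5
      exact h5.congr fun N => (hplus N).symm
    have htend2 : Tendsto (fun N => ∑ m ∈ Finset.range (N + 1), (Psi n φ m) x) atTop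
        (𝓝 (∑' m, (Psi n φ m) x)) :=
      hhs.tendsto_sum_nat.comp (tendsto_add_atTop_nat 1)
    have hlim : (∑' m, (Psi n φ m) x) = φ x := tendsto_nhds_unique htend2 htend
    exact hlim ▸ hhs
  · -- (ii)+(iii)
    intro m
    refine ⟨(Psi n φ m).smooth ⊤, psifun_hcs φ m, ?_, psifun_integral_zero φ m⟩
    intro x hx
    simp only [Set.mem_setOf_eq]
    have hnorm : ‖x‖ ≤ 2 ^ (m + 1) := by
      by_contra hc
      push_neg at hc
      exact hx (psifun_zero_of_le_norm hc.le)
    have h1 : ρ x ≤ 2 ^ (m + 1) :=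
      rho_le_of_norm_le hα hρ0 hρ (one_le_pow₀ one_le_two) hnorm
    calc ρ x ≤ 2 ^ (m + 1) := h1
    _ = 2 * (2:ℝ) ^ ((1:ℝ) * (m:ℝ)) := by
        rw [one_mul, Real.rpow_natCast]
        ring
  · -- (iv)
    intro p hp M hM
    obtain ⟨c, hc0, hc⟩ := eLp_bound (n := n) p hp
    obtain ⟨A1, hA10, hA1⟩ := sup_sem_decay (Finset.Iic (n + 1, 0)) (Psi n φ) M
      (fun i => Psi_sem_decay φ i.1 i.2 M hM.le)
    have hFT : ∀ i : ℕ × ℕ, ∃ A : ℝ, 0 ≤ A ∧ ∀ m : ℕ,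
        schwartzSeminormFamily ℝ (Ee n) ℂ i
          ((fun m => SchwartzMap.fourierTransformCLM ℝ (Psi n φ m)) m) ≤
          A * (2:ℝ) ^ (-(M * (m : ℝ))) := by
      intro i
      obtain ⟨s, C, hC0, hC⟩ := FT_sem_bound (n := n) i
      obtain ⟨A, hA0, hA⟩ := sup_sem_decay s (Psi n φ) M
        (fun i => Psi_sem_decay φ i.1 i.2 M hM.le)
      refine ⟨C * A, mul_nonneg hC0 hA0, fun m => ?_⟩
      calc schwartzSeminormFamily ℝ (Ee n) ℂ i
            (SchwartzMap.fourierTransformCLM ℝ (Psi n φ m))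
          ≤ C * ((s.sup (schwartzSeminormFamily ℝ (Ee n) ℂ)) (Psi n φ m)) := hC (Psi n φ m)
      _ ≤ C * (A * (2:ℝ) ^ (-(M * (m : ℝ)))) :=
          mul_le_mul_of_nonneg_left (hA m) hC0
      _ = (C * A) * (2:ℝ) ^ (-(M * (m : ℝ))) := by ring
    obtain ⟨A2, hA20, hA2⟩ := sup_sem_decay (Finset.Iic (n + 1, 0))
      (fun m => SchwartzMap.fourierTransformCLM ℝ (Psi n φ m)) M hFT
    refine ⟨max (c * A1) (c * A2), fun m => ⟨?_, ?_⟩⟩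
    · have h2pos : (0:ℝ) < (2:ℝ) ^ (-(M * (m : ℝ))) := Real.rpow_pos_of_pos two_pos _
      calc eLpNorm (⇑(Psi n φ m)) p volume
          ≤ ENNReal.ofReal (c * ((Finset.Iic (n + 1, 0)).sup
              (schwartzSeminormFamily ℝ (Ee n) ℂ)) (Psi n φ m)) := hc (Psi n φ m)
      _ ≤ ENNReal.ofReal (max (c * A1) (c * A2) * (2:ℝ) ^ (-(M * (m : ℝ)))) := by
          apply ENNReal.ofReal_le_ofReal
          calc c * ((Finset.Iic (n + 1, 0)).sup
                (schwartzSeminormFamily ℝ (Ee n) ℂ)) (Psi n φ m)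
              ≤ c * (A1 * (2:ℝ) ^ (-(M * (m : ℝ)))) :=
                mul_le_mul_of_nonneg_left (hA1 m) hc0
          _ = (c * A1) * (2:ℝ) ^ (-(M * (m : ℝ))) := by ring
          _ ≤ max (c * A1) (c * A2) * (2:ℝ) ^ (-(M * (m : ℝ))) :=
              mul_le_mul_of_nonneg_right (le_max_left _ _) h2pos.le
    · have h2pos : (0:ℝ) < (2:ℝ) ^ (-(M * (m : ℝ))) := Real.rpow_pos_of_pos two_pos _
      have hFTeq : FourierTransform.fourier (⇑(Psi n φ m)) =
          ⇑(SchwartzMap.fourierTransformCLM ℝ (Psi n φ m)) :=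
        rfl
      rw [hFTeq]
      calc eLpNorm (⇑(SchwartzMap.fourierTransformCLM ℝ (Psi n φ m))) p volume
          ≤ ENNReal.ofReal (c * ((Finset.Iic (n + 1, 0)).sup
              (schwartzSeminormFamily ℝ (Ee n) ℂ))
              (SchwartzMap.fourierTransformCLM ℝ (Psi n φ m))) :=
            hc (SchwartzMap.fourierTransformCLM ℝ (Psi n φ m))
      _ ≤ ENNReal.ofReal (max (c * A1) (c * A2) * (2:ℝ) ^ (-(M * (m : ℝ)))) := by
          apply ENNReal.ofReal_le_ofReal
          calc c * ((Finset.Iic (n + 1, 0)).sup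
                (schwartzSeminormFamily ℝ (Ee n) ℂ))
                (SchwartzMap.fourierTransformCLM ℝ (Psi n φ m))
              ≤ c * (A2 * (2:ℝ) ^ (-(M * (m : ℝ)))) :=
                mul_le_mul_of_nonneg_left (hA2 m) hc0
          _ = (c * A2) * (2:ℝ) ^ (-(M * (m : ℝ))) := by ring
          _ ≤ max (c * A1) (c * A2) * (2:ℝ) ^ (-(M * (m : ℝ))) :=
              mul_le_mul_of_nonneg_right (le_max_right _ _) h2pos.le
end
end

section
/- For every z ∈ ℂ with Re z < −1, every ξ ∈ ℝ and every η ≠ 0, the integral ∫_ℝ e^{−2πi(ξt + ηγ(t))} (1 + η²γ(t)²)^z dt converges absolutely and satisfies the bound |2π ξ ∫_ℝ e^{−2πi(ξt + ηγ(t))} (1 + η²γ(t)²)^z dt| ≤ C (1 + |Im z|), where C depends only on Re z (not on ξ, η, Im z, or γ). (This quantity is |ξ ∂m_z/∂ξ (ξ,η)|, where m_z(ξ,η) = p.v. ∫_ℝ e^{−2πi(ξt + ηγ(t))} (1 + η²γ(t)²)^z dt/t.) -/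
open MeasureTheory Topology Filter

open scoped FourierTransform

private lemma aux_hasDerivAt {γ : ℝ → ℝ} (hodd : ∀ t, γ (-t) = -γ t)
    (hC2 : ContDiffOn ℝ 2 γ (Set.Ici 0)) (t : ℝ) :
    HasDerivAt γ (derivWithin γ (Set.Ici 0) |t|) t := by
  have hdiff : ∀ s ∈ Set.Ici (0:ℝ),
      HasDerivWithinAt γ (derivWithin γ (Set.Ici 0) s) (Set.Ici 0) s :=
    fun s hs => ((hC2.differentiableOn (by norm_num)) s hs).hasDerivWithinAt
  have hgeq : (fun s : ℝ => -γ (-s)) = γ := by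
    funext s
    rw [hodd]; ring
  have hpos : ∀ s : ℝ, 0 < s → HasDerivAt γ (derivWithin γ (Set.Ici 0) s) s :=
    fun s hs => (hdiff s hs.le).hasDerivAt (Ici_mem_nhds hs)
  rcases lt_trichotomy t 0 with ht | rfl | ht
  · have h1 : HasDerivAt (fun s : ℝ => γ (-s))
        (derivWithin γ (Set.Ici 0) (-t) * (-1)) t :=
      (hpos (-t) (by linarith)).comp t (hasDerivAt_neg t)
    have h2 := h1.fun_neg
    rw [hgeq] at h2
    rw [abs_of_neg ht]
    simpa using h2
  · have h0 := hdiff 0 (Set.mem_Ici.mpr le_rfl)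
    have hn : HasDerivWithinAt (fun s : ℝ => -s) (-1 : ℝ) (Set.Iic 0) 0 :=
      (hasDerivAt_neg (0:ℝ)).hasDerivWithinAt
    have hmaps : Set.MapsTo (fun s : ℝ => -s) (Set.Iic 0) (Set.Ici 0) :=
      fun x hx => Set.mem_Ici.2 (neg_nonneg.2 (Set.mem_Iic.1 hx))
    have h0' : HasDerivWithinAt γ (derivWithin γ (Set.Ici 0) 0) (Set.Ici 0)
        ((fun s : ℝ => -s) 0) := by simpa using h0
    have h1 := HasDerivWithinAt.comp (0:ℝ) h0' hn hmaps
    have h2 := h1.fun_neg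
    have heq2 : (fun x : ℝ => -(γ ∘ Neg.neg) x) = γ := by
      funext s
      show -γ (-s) = γ s
      rw [hodd]; ring
    rw [heq2] at h2
    have h3 : HasDerivWithinAt γ (derivWithin γ (Set.Ici 0) 0) (Set.Iic 0) 0 := by
      simpa using h2
    have h4 := h0.union h3
    rw [show Set.Ici (0:ℝ) ∪ Set.Iic 0 = Set.univ by ext x; simp [le_total]] at h4
    rw [abs_zero]
    exact hasDerivWithinAt_univ.mp h4
  · rw [abs_of_pos ht]
    exact hpos t ht

set_option maxHeartbeats 2000000

/-- the bound `|ξ ∂m_z/∂ξ (ξ,η)| ≤ C (1 + |Im z|)` for `Re z < −1`, where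
`ξ ∂m_z/∂ξ (ξ,η) = −2πi ξ ∫ e^{−2πi(ξt + ηγ(t))} (1 + η²γ(t)²)^z dt` and the integral
converges absolutely; `C` depends only on `Re z` (not on `ξ`, `η`, `Im z`, or `γ`). -/
theorem xi_derivative_multiplier_bound :
    ∀ a : ℝ, a < -1 → ∃ C : ℝ, ∀ γ : ℝ → ℝ,
      Continuous γ → (∀ t, γ (-t) = -γ t) →
      ContDiffOn ℝ 2 γ (Set.Ici 0) →
      StrictMonoOn γ (Set.Ici 0) → ConvexOn ℝ (Set.Ici 0) γ →
      (MonotoneOn (deriv (deriv γ)) (Set.Ioi 0) ∨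
        AntitoneOn (deriv (deriv γ)) (Set.Ioi 0)) →
      (∃ C₀ > (0:ℝ), ∀ t : ℝ, 0 < t → deriv γ t ≤ C₀ * t * deriv (deriv γ) t) →
      ∀ z : ℂ, z.re = a → ∀ ξ η : ℝ, η ≠ 0 →
        Integrable (fun t : ℝ =>
          Complex.exp (((-(2 * Real.pi * (ξ * t + η * γ t)) : ℝ) : ℂ) * Complex.I) *
            ((1 + η ^ 2 * γ t ^ 2 : ℝ) : ℂ) ^ z) volume ∧
        ‖2 * Real.pi * (ξ : ℂ) * ∫ t : ℝ,
            Complex.exp (((-(2 * Real.pi * (ξ * t + η * γ t)) : ℝ) : ℂ) * Complex.I) *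
              ((1 + η ^ 2 * γ t ^ 2 : ℝ) : ℂ) ^ z‖ ≤ C * (1 + |z.im|) := by
  intro a ha
  refine ⟨(2 * Real.pi + 2 * |a| + 2) * Real.pi, ?_⟩
  intro γ hcont hodd hC2 hsm hconv _ _ z hz ξ η hη
  have pi_pos := Real.pi_pos
  have hη2 : (0:ℝ) < η ^ 2 := by positivity
  have γ0 : γ 0 = 0 := by
    have := hodd 0
    simp only [neg_zero] at this
    linarith
  -- the derivative of γ on all of ℝ
  set D : ℝ → ℝ := fun t => derivWithin γ (Set.Ici 0) |t| with hDdef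
  have hD : ∀ t, HasDerivAt γ (D t) t := aux_hasDerivAt hodd hC2
  have hDcont : Continuous D := by
    have h1 : ContinuousOn (derivWithin γ (Set.Ici 0)) (Set.Ici 0) :=
      hC2.continuousOn_derivWithin (uniqueDiffOn_Ici 0) (by norm_num)
    rw [← continuousOn_univ]
    exact h1.comp continuous_abs.continuousOn (fun x _ => abs_nonneg x)
  have hstrict : StrictMono γ := by
    intro s t hst
    rcases le_or_gt 0 s with hs | hs
    · exact hsm hs (le_trans hs hst.le) hst
    · rcases le_or_gt t 0 with ht | ht
      · have h1 : γ (-t) < γ (-s) :=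
          hsm (by simpa using ht) (by simp; linarith) (by linarith)
        have e1 := hodd s
        have e2 := hodd t
        linarith
      · have h1 : γ 0 < γ (-s) := hsm (Set.mem_Ici.2 (le_refl 0)) (by simp; linarith) (by linarith)
        have h2 : γ 0 < γ t := hsm (Set.mem_Ici.2 (le_refl 0)) ht.le ht
        have e1 := hodd s
        linarith
  have hmono : Monotone γ := hstrict.monotone
  have hDnonneg : ∀ t, 0 ≤ D t := by
    intro t
    have h1 := hasDerivAt_iff_tendsto_slope.1 (hD t)
    refine ge_of_tendsto h1 ?_
    filter_upwards with x
    rcases le_total t x with hx | hx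
    · rw [slope_def_field]
      exact div_nonneg (by simpa using hmono hx) (by linarith)
    · rw [slope_def_field]
      apply div_nonneg_iff.2
      right
      exact ⟨by simpa using hmono hx, by linarith⟩
  set w : ℝ → ℝ := fun t => 1 + η ^ 2 * γ t ^ 2 with hwdef
  have hw1 : ∀ t, 1 ≤ w t := fun t => by
    simp only [hwdef, le_add_iff_nonneg_right]
    positivity
  have hw0 : ∀ t, 0 < w t := fun t => lt_of_lt_of_le one_pos (hw1 t)
  have hwcont : Continuous w := continuous_const.add (continuous_const.mul (hcont.pow 2))
  have hw' : ∀ t, HasDerivAt w (2 * η ^ 2 * γ t * D t) t := by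
    intro t
    have h1 : HasDerivAt (fun t => γ t ^ 2) ((2:ℕ) * γ t ^ 1 * D t) t := (hD t).pow 2
    have h2 := (h1.const_mul (η ^ 2)).const_add 1
    refine h2.congr_deriv ?_
    push_cast
    ring
  -- the function g and its derivative
  set ψ : ℝ → ℂ := fun t => ((-(2 * Real.pi * (η * γ t)) : ℝ) : ℂ) * Complex.I
      + z * ((Real.log (w t) : ℝ) : ℂ) with hψdef
  set g : ℝ → ℂ := fun t => Complex.exp (ψ t) with hgdef
  set ψ' : ℝ → ℂ := fun t => ((-(2 * Real.pi * (η * D t)) : ℝ) : ℂ) * Complex.I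
      + z * ((2 * η ^ 2 * γ t * D t / w t : ℝ) : ℂ) with hψ'def
  have hψ : ∀ t, HasDerivAt ψ (ψ' t) t := by
    intro t
    have h1 : HasDerivAt (fun t : ℝ => -(2 * Real.pi * (η * γ t)))
        (-(2 * Real.pi * (η * D t))) t := by
      have := (((hD t).const_mul η).const_mul (2 * Real.pi)).fun_neg
      simpa [mul_assoc] using this
    have h2 : HasDerivAt (fun t : ℝ => Real.log (w t)) (2 * η ^ 2 * γ t * D t / w t) t :=
      (hw' t).log (hw0 t).ne'
    exact ((h1.ofReal_comp).mul_const Complex.I).add ((h2.ofReal_comp).const_mul z)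
  have hg' : ∀ t, HasDerivAt g (g t * ψ' t) t := fun t => (hψ t).cexp
  have hψre : ∀ t, (ψ t).re = a * Real.log (w t) := by
    intro t
    simp [hψdef, hz]
  have hgnorm : ∀ t, ‖g t‖ = w t ^ a := by
    intro t
    rw [hgdef]
    rw [Complex.norm_exp, hψre t,
      Real.rpow_def_of_pos (hw0 t), mul_comm]
  have hψcont : Continuous ψ := by
    apply Continuous.add
    · exact (Complex.continuous_ofReal.comp
        ((continuous_const.mul (continuous_const.mul hcont)).neg)).mul continuous_const
    · exact continuous_const.mul (Complex.continuous_ofReal.comp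
        (hwcont.log fun t => (hw0 t).ne'))
  have hgcont : Continuous g := Complex.continuous_exp.comp hψcont
  have hψ'cont : Continuous ψ' := by
    apply Continuous.add
    · exact (Complex.continuous_ofReal.comp
        ((continuous_const.mul (continuous_const.mul hDcont)).neg)).mul continuous_const
    · refine continuous_const.mul (Complex.continuous_ofReal.comp ?_)
      exact (((continuous_const.mul hcont).mul hDcont).div hwcont fun t => (hw0 t).ne')
  -- integrability of g
  have hm0 : 0 < γ 1 := by
    rw [← γ0]
    exact hstrict one_pos
  set b : ℝ := η ^ 2 * γ 1 ^ 2 with hbdef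
  have hb0 : (0:ℝ) < b := by positivity
  have hlin : ∀ s : ℝ, 1 ≤ s → γ 1 * s ≤ γ s := by
    intro s hs
    have hs0 : (0:ℝ) < s := by linarith
    have h1 := hconv.2 (Set.mem_Ici.mpr hs0.le) (Set.mem_Ici.mpr (le_refl (0:ℝ)))
      (show (0:ℝ) ≤ 1/s by positivity)
      (show (0:ℝ) ≤ 1 - 1/s by rw [sub_nonneg, div_le_one hs0]; linarith) (by ring)
    simp only [smul_eq_mul, mul_zero, add_zero, γ0] at h1
    rw [show (1:ℝ)/s * s = 1 by field_simp] at h1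
    have h2 : γ 1 * s ≤ (1/s * γ s) * s := mul_le_mul_of_nonneg_right h1 hs0.le
    have h3 : (1/s * γ s) * s = γ s := by field_simp
    linarith
  have hγsq : ∀ t : ℝ, 1 ≤ |t| → b * t ^ 2 ≤ η ^ 2 * γ t ^ 2 := by
    intro t ht
    have h1 : γ 1 * |t| ≤ γ |t| := hlin _ ht
    have h2 : γ t ^ 2 = γ |t| ^ 2 := by
      rcases abs_cases t with ⟨h, _⟩ | ⟨h, _⟩
      · rw [h]
      · rw [h, hodd]; ring
    have h3 : (γ 1 * |t|) ^ 2 ≤ γ |t| ^ 2 := by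
      apply pow_le_pow_left₀ (by positivity) h1
    rw [h2]
    have h4 : b * t ^ 2 = η ^ 2 * (γ 1 * |t|) ^ 2 := by
      rw [hbdef, mul_pow, sq_abs]
      ring
    rw [h4]
    nlinarith
  set c : ℝ := min (1/2 : ℝ) (1 + b)⁻¹ with hcdef
  have hc0 : 0 < c := lt_min (by norm_num) (by positivity)
  have hkey : ∀ t : ℝ, c * (1 + b * t ^ 2) ≤ w t := by
    intro t
    rcases le_total (|t|) 1 with ht | ht
    · have h1 : t ^ 2 ≤ 1 := by
        rw [← sq_abs]
        nlinarith [abs_nonneg t]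
      have h2 : b * t ^ 2 ≤ b := by nlinarith
      calc c * (1 + b * t ^ 2) ≤ (1 + b)⁻¹ * (1 + b) := by
            apply mul_le_mul (min_le_right _ _) (by linarith) (by positivity) (by positivity)
        _ = 1 := inv_mul_cancel₀ (by positivity)
        _ ≤ w t := hw1 t
    · have h1 := hγsq t ht
      have h2 : c * (1 + b * t ^ 2) ≤ (1/2) * (1 + b * t ^ 2) :=
        mul_le_mul_of_nonneg_right (min_le_left _ _) (by positivity)
      have h3 : (1:ℝ) ≤ w t := hw1 t
      have h4 : b * t ^ 2 ≤ w t := by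
        rw [hwdef]
        simp only
        nlinarith
      nlinarith
  have hgbound : ∀ t, ‖g t‖ ≤ c ^ a * (1 + b * t ^ 2)⁻¹ := by
    intro t
    rw [hgnorm t]
    have hbt : (0:ℝ) < 1 + b * t ^ 2 := by positivity
    have h1 : w t ^ a ≤ (c * (1 + b * t ^ 2)) ^ a :=
      Real.rpow_le_rpow_of_nonpos (by positivity) (hkey t) (by linarith)
    have h2 : (c * (1 + b * t ^ 2)) ^ a = c ^ a * (1 + b * t ^ 2) ^ a :=
      Real.mul_rpow hc0.le hbt.le
    have h3 : (1 + b * t ^ 2) ^ a ≤ (1 + b * t ^ 2) ^ (-1 : ℝ) :=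
      Real.rpow_le_rpow_of_exponent_le (by nlinarith) (by linarith)
    rw [Real.rpow_neg_one] at h3
    calc w t ^ a ≤ c ^ a * (1 + b * t ^ 2) ^ a := by rw [← h2]; exact h1
      _ ≤ c ^ a * (1 + b * t ^ 2)⁻¹ :=
          mul_le_mul_of_nonneg_left h3 (Real.rpow_nonneg hc0.le a)
  have hIb : Integrable (fun t : ℝ => c ^ a * (1 + b * t ^ 2)⁻¹) := by
    have hsb : Real.sqrt b ≠ 0 := by positivity
    have h1 : Integrable (fun t : ℝ => (1 + (Real.sqrt b * t) ^ 2)⁻¹) :=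
      integrable_inv_one_add_sq.comp_mul_left' hsb
    have h2 : (fun t : ℝ => (1 + (Real.sqrt b * t) ^ 2)⁻¹)
        = fun t : ℝ => (1 + b * t ^ 2)⁻¹ := by
      funext t
      rw [mul_pow, Real.sq_sqrt hb0.le]
    rw [h2] at h1
    exact h1.const_mul _
  have hIg : Integrable g :=
    hIb.mono' hgcont.aestronglyMeasurable (ae_of_all _ hgbound)
  -- the comparison function h and change of variables
  set h : ℝ → ℝ := fun u => 2 * Real.pi * (1 + u ^ 2) ^ a
      + 2 * ‖z‖ * (|u| * (1 + u ^ 2) ^ (a - 1)) with hhdef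
  have hh0 : ∀ u, 0 ≤ h u := by
    intro u
    have h1 : (0:ℝ) ≤ (1 + u ^ 2) ^ a := Real.rpow_nonneg (by positivity) _
    have h2 : (0:ℝ) ≤ (1 + u ^ 2) ^ (a - 1) := Real.rpow_nonneg (by positivity) _
    have h3 := norm_nonneg z
    have h4 := abs_nonneg u
    positivity
  have hhcont : Continuous h := by
    apply Continuous.add
    · exact continuous_const.mul ((continuous_const.add (continuous_pow 2)).rpow_const
        fun x => Or.inl (show (1:ℝ) + x ^ 2 ≠ 0 by positivity))
    · exact continuous_const.mul (continuous_abs.mul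
        ((continuous_const.add (continuous_pow 2)).rpow_const fun x => Or.inl (show (1:ℝ) + x ^ 2 ≠ 0 by positivity)))
  have hhbound : ∀ u : ℝ, h u ≤ (2 * Real.pi + 2 * ‖z‖) * (1 + u ^ 2)⁻¹ := by
    intro u
    have hu0 : (0:ℝ) < 1 + u ^ 2 := by positivity
    have hu1 : (1:ℝ) ≤ 1 + u ^ 2 := by nlinarith
    have h1 : (1 + u ^ 2) ^ a ≤ (1 + u ^ 2) ^ (-1 : ℝ) :=
      Real.rpow_le_rpow_of_exponent_le hu1 (by linarith)
    have h2 : |u| * (1 + u ^ 2) ^ (a - 1) ≤ (1 + u ^ 2) ^ (-1 : ℝ) := by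
      have ha1 : |u| ≤ (1 + u ^ 2) ^ (1/2 : ℝ) := by
        rw [← Real.sqrt_eq_rpow]
        rw [show |u| = Real.sqrt (u ^ 2) by rw [Real.sqrt_sq_eq_abs]]
        exact Real.sqrt_le_sqrt (by nlinarith)
      have ha2 : |u| * (1 + u ^ 2) ^ (a - 1)
          ≤ (1 + u ^ 2) ^ (1/2 : ℝ) * (1 + u ^ 2) ^ (a - 1) :=
        mul_le_mul_of_nonneg_right ha1 (Real.rpow_nonneg hu0.le _)
      have ha3 : (1 + u ^ 2) ^ (1/2 : ℝ) * (1 + u ^ 2) ^ (a - 1)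
          = (1 + u ^ 2) ^ (1/2 + (a - 1)) := (Real.rpow_add hu0 _ _).symm
      have ha4 : (1 + u ^ 2) ^ (1/2 + (a - 1)) ≤ (1 + u ^ 2) ^ (-1 : ℝ) :=
        Real.rpow_le_rpow_of_exponent_le hu1 (by linarith)
      calc |u| * (1 + u ^ 2) ^ (a - 1) ≤ _ := ha2
        _ = _ := ha3
        _ ≤ _ := ha4
    rw [Real.rpow_neg_one] at h1 h2
    have hz0 := norm_nonneg z
    calc h u ≤ 2 * Real.pi * (1 + u ^ 2)⁻¹ + 2 * ‖z‖ * (1 + u ^ 2)⁻¹ := by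
          apply add_le_add
          · exact mul_le_mul_of_nonneg_left h1 (by positivity)
          · exact mul_le_mul_of_nonneg_left h2 (by positivity)
      _ = (2 * Real.pi + 2 * ‖z‖) * (1 + u ^ 2)⁻¹ := by ring
  have hIh : Integrable h := by
    refine (integrable_inv_one_add_sq.const_mul (2 * Real.pi + 2 * ‖z‖)).mono'
      hhcont.aestronglyMeasurable (ae_of_all _ fun u => ?_)
    rw [Real.norm_eq_abs, abs_of_nonneg (hh0 u)]
    exact hhbound u
  set f : ℝ → ℝ := fun t => η * γ t with hfdef
  set f' : ℝ → ℝ := fun t => η * D t with hf'def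
  have hf'univ : ∀ x ∈ Set.univ, HasDerivWithinAt f (f' x) Set.univ x :=
    fun x _ => ((hD x).const_mul η).hasDerivWithinAt
  have hfinj : Set.InjOn f Set.univ :=
    fun x _ y _ hxy => hstrict.injective (mul_left_cancel₀ hη hxy)
  have hIfh : Integrable (fun x => |f' x| * h (f x)) := by
    have h1 : IntegrableOn h (f '' Set.univ) := hIh.integrableOn
    have h2 := (integrableOn_image_iff_integrableOn_abs_deriv_smul
      MeasurableSet.univ hf'univ hfinj h).1 h1
    simpa [integrableOn_univ, smul_eq_mul] using h2
  have hIntfh : ∫ x, |f' x| * h (f x) ≤ (2 * Real.pi + 2 * ‖z‖) * Real.pi := by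
    have h1 : ∫ x in f '' Set.univ, h x = ∫ x in Set.univ, |f' x| • h (f x) :=
      integral_image_eq_integral_abs_deriv_smul MeasurableSet.univ hf'univ hfinj h
    have h2 : ∫ x in f '' Set.univ, h x ≤ ∫ x, h x :=
      setIntegral_le_integral hIh (ae_of_all _ hh0)
    have h3 : ∫ x, h x ≤ ∫ x : ℝ, (2 * Real.pi + 2 * ‖z‖) * (1 + x ^ 2)⁻¹ :=
      integral_mono hIh (integrable_inv_one_add_sq.const_mul _) hhbound
    rw [integral_const_mul, integral_univ_inv_one_add_sq] at h3
    have h4 : ∫ x, |f' x| * h (f x) = ∫ x in Set.univ, |f' x| • h (f x) := by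
      rw [setIntegral_univ]
      simp [smul_eq_mul]
    rw [h4, ← h1]
    linarith
  -- pointwise bound on the derivative of g
  have hg'bound : ∀ t, ‖g t * ψ' t‖ ≤ |f' t| * h (f t) := by
    intro t
    rw [norm_mul, hgnorm t]
    have hwt := hw0 t
    have hDt := hDnonneg t
    have hwa : (0:ℝ) ≤ w t ^ a := Real.rpow_nonneg hwt.le _
    have hb1 : ‖ψ' t‖ ≤ 2 * Real.pi * (|η| * D t)
        + ‖z‖ * (2 * η ^ 2 * |γ t| * D t / w t) := by
      refine (norm_add_le _ _).trans ?_
      apply add_le_add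
      · rw [norm_mul, Complex.norm_I, mul_one,
          Complex.norm_real, Real.norm_eq_abs, abs_neg, abs_mul (2 * Real.pi), abs_mul η,
          abs_of_pos (by positivity : (0:ℝ) < 2 * Real.pi), abs_of_nonneg hDt]
      · rw [norm_mul, Complex.norm_real, Real.norm_eq_abs]
        apply mul_le_mul_of_nonneg_left _ (norm_nonneg z)
        rw [abs_div, abs_of_pos hwt, abs_mul, abs_mul, abs_mul,
          abs_of_pos (by norm_num : (0:ℝ) < 2), abs_of_pos hη2, abs_of_nonneg hDt]
    calc w t ^ a * ‖ψ' t‖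
        ≤ w t ^ a * (2 * Real.pi * (|η| * D t)
          + ‖z‖ * (2 * η ^ 2 * |γ t| * D t / w t)) :=
          mul_le_mul_of_nonneg_left hb1 hwa
      _ = |f' t| * h (f t) := by
          have heqw' : 1 + (η * γ t) ^ 2 = w t := by
            show 1 + (η * γ t) ^ 2 = 1 + η ^ 2 * γ t ^ 2
            ring
          have heq2' : w t ^ (a - 1) = w t ^ a / w t := by
            rw [Real.rpow_sub hwt, Real.rpow_one]
          have e3 : h (f t) = 2 * Real.pi * w t ^ a
              + 2 * ‖z‖ * ((|η| * |γ t|) * (w t ^ a / w t)) := by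
            show 2 * Real.pi * (1 + (η * γ t) ^ 2) ^ a
              + 2 * ‖z‖ * (|η * γ t| * (1 + (η * γ t) ^ 2) ^ (a - 1)) = _
            rw [heqw', heq2', abs_mul]
          have e5 : |f' t| = |η| * D t := by
            show |η * D t| = _
            rw [abs_mul, abs_of_nonneg hDt]
          rw [e3, e5]
          field_simp
          ring_nf
          rw [sq_abs]
          ring
  set g1 : ℝ → ℂ := fun t => g t * ψ' t with hg1def
  have hg1cont : Continuous g1 := hgcont.mul hψ'cont
  have hIg1 : Integrable g1 :=
    hIfh.mono' hg1cont.aestronglyMeasurable (ae_of_all _ hg'bound)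
  have hderiv : deriv g = g1 := funext fun t => (hg' t).deriv
  have hdiffg : Differentiable ℝ g := fun t => (hg' t).differentiableAt
  have hIg' : Integrable (deriv g) := by rw [hderiv]; exact hIg1
  -- Fourier transform identity
  have hF := Real.fourier_deriv hIg hdiffg hIg'
  -- identification of the integrand
  have hstepA : ∀ t : ℝ,
      Complex.exp (((-(2 * Real.pi * (ξ * t + η * γ t)) : ℝ) : ℂ) * Complex.I) *
        ((w t : ℝ) : ℂ) ^ z
      = Complex.exp (((-(2 * Real.pi * (t * ξ)) : ℝ) : ℂ) * Complex.I) * g t := by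
    intro t
    have hwne : ((w t : ℝ) : ℂ) ≠ 0 := by
      simp only [ne_eq, Complex.ofReal_eq_zero]
      exact (hw0 t).ne'
    have hcpow : ((w t : ℝ) : ℂ) ^ z
        = Complex.exp (Complex.log ((w t : ℝ) : ℂ) * z) :=
      Complex.cpow_def_of_ne_zero hwne _
    rw [hcpow, ← Complex.ofReal_log (hw0 t).le, hgdef]
    simp only [hψdef]
    rw [← Complex.exp_add, ← Complex.exp_add]
    congr 1
    push_cast
    ring
  have hEcont : Continuous fun t : ℝ =>
      Complex.exp (((-(2 * Real.pi * (t * ξ)) : ℝ) : ℂ) * Complex.I) := by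
    apply Complex.continuous_exp.comp
    exact (Complex.continuous_ofReal.comp (by continuity)).mul continuous_const
  have hIntegrand : Integrable (fun t : ℝ =>
      Complex.exp (((-(2 * Real.pi * (ξ * t + η * γ t)) : ℝ) : ℂ) * Complex.I) *
        ((w t : ℝ) : ℂ) ^ z) volume := by
    simp only [hstepA]
    refine hIg.norm.mono' (hEcont.mul hgcont).aestronglyMeasurable
      (ae_of_all _ fun t => ?_)
    rw [norm_mul, Complex.norm_exp_ofReal_mul_I, one_mul]
  refine ⟨hIntegrand, ?_⟩
  have hFg : (∫ t : ℝ,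
      Complex.exp (((-(2 * Real.pi * (ξ * t + η * γ t)) : ℝ) : ℂ) * Complex.I) *
        ((w t : ℝ) : ℂ) ^ z) = 𝓕 g ξ := by
    rw [Real.fourier_eq']
    refine integral_congr_ae (Eventually.of_forall fun t => ?_)
    simp only [hstepA]
    simp only [RCLike.inner_apply, conj_trivial, smul_eq_mul]
    congr 3
    push_cast
    ring
  have hFnorm : ‖𝓕 (deriv g) ξ‖ ≤ ∫ t, ‖g1 t‖ := by
    calc ‖𝓕 (deriv g) ξ‖ ≤ ∫ t, ‖deriv g t‖ :=
          by rw [Real.fourier_eq]; exact (norm_integral_le_integral_norm _).trans (le_of_eq (by congr 1; ext v; rw [Circle.norm_smul]))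
      _ = ∫ t, ‖g1 t‖ := by rw [hderiv]
  have hchain : ∫ t, ‖g1 t‖ ≤ (2 * Real.pi + 2 * ‖z‖) * Real.pi := by
    have h5 := integral_mono hIg1.norm hIfh hg'bound
    linarith [hIntfh]
  have hfinal : (2 * Real.pi + 2 * ‖z‖) * Real.pi
      ≤ (2 * Real.pi + 2 * |a| + 2) * Real.pi * (1 + |z.im|) := by
    have h1 : ‖z‖ ≤ |z.re| + |z.im| := Complex.norm_le_abs_re_add_abs_im z
    rw [hz] at h1
    nlinarith [mul_le_mul_of_nonneg_right h1 pi_pos.le, abs_nonneg a, abs_nonneg z.im,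
      mul_nonneg (mul_nonneg (abs_nonneg z.im) pi_pos.le) pi_pos.le,
      mul_nonneg (abs_nonneg a) (mul_nonneg (abs_nonneg z.im) pi_pos.le)]
  rw [hFg]
  have hnorm_eq : ‖2 * (Real.pi : ℂ) * (ξ : ℂ) * 𝓕 g ξ‖ = ‖𝓕 (deriv g) ξ‖ := by
    rw [hF]
    simp only [norm_mul, norm_smul, Complex.norm_I, Complex.norm_real, Real.norm_eq_abs,
      Complex.norm_two]
    ring
  calc ‖2 * (Real.pi : ℂ) * (ξ : ℂ) * 𝓕 g ξ‖ = ‖𝓕 (deriv g) ξ‖ := hnorm_eq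
    _ ≤ ∫ t, ‖g1 t‖ := hFnorm
    _ ≤ (2 * Real.pi + 2 * ‖z‖) * Real.pi := hchain
    _ ≤ (2 * Real.pi + 2 * |a| + 2) * Real.pi * (1 + |z.im|) := hfinal
end

section
/- For every z ∈ ℂ with Re z < −1, every ξ ∈ ℝ and every η ≠ 0, the two integrals I₁ = ∫_ℝ e^{−2πi(ξt + ηγ(t))} η γ(t) (1 + η²γ(t)²)^z dt/t and I₂ = ∫_ℝ e^{−2πi(ξt + ηγ(t))} η² γ(t)² (1 + η²γ(t)²)^{z−1} dt/t converge absolutely, and |−2πi I₁ + 2z I₂| ≤ C (1 + |Im z|), where C depends only on Re z (not on ξ, η, Im z, or γ). (This quantity is |η ∂m_z/∂η (ξ,η)|, where m_z(ξ,η) = p.v. ∫_ℝ e^{−2πi(ξt + ηγ(t))} (1 + η²γ(t)²)^z dt/t.) -/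
open MeasureTheory Topology Filter
open Set

lemma aux_psi_int {ψ : ℝ → ℝ} (hc : Continuous ψ) {p : ℝ} (hp : p < -1)
    (hψ0 : ∀ v, 0 ≤ ψ v) (hbound : ∀ v : ℝ, 1 ≤ v → ψ v ≤ v ^ p) :
    IntegrableOn ψ (Set.Ioi 0) := by
  rw [← Set.Ioc_union_Ioi_eq_Ioi (zero_le_one (α := ℝ))]
  refine IntegrableOn.union (hc.integrableOn_Ioc) ?_
  refine Integrable.mono' (integrableOn_Ioi_rpow_of_lt hp one_pos)
    (hc.aestronglyMeasurable.restrict) ?_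
  filter_upwards [ae_restrict_mem measurableSet_Ioi] with v hv
  rw [Real.norm_eq_abs, abs_of_nonneg (hψ0 v)]
  exact hbound v (le_of_lt hv)

lemma aux_psi1 {a : ℝ} (ha : a < -1) :
    Continuous (fun v : ℝ => (1 + v ^ 2) ^ a) ∧ (∀ v : ℝ, 0 ≤ (1 + v ^ 2) ^ a) ∧
      IntegrableOn (fun v : ℝ => (1 + v ^ 2) ^ a) (Set.Ioi 0) := by
  have hc : Continuous (fun v : ℝ => (1 + v ^ 2) ^ a) := by
    apply Continuous.rpow_const (by continuity)
    intro v; left; positivity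
  have h0 : ∀ v : ℝ, 0 ≤ (1 + v ^ 2) ^ a := fun v => Real.rpow_nonneg (by positivity) a
  refine ⟨hc, h0, aux_psi_int hc (p := 2 * a) (by linarith) h0 ?_⟩
  intro v hv
  have hv0 : (0:ℝ) < v := lt_of_lt_of_le one_pos hv
  have h1 : (1 + v ^ 2) ^ a ≤ (v ^ 2) ^ a :=
    Real.rpow_le_rpow_of_nonpos (by positivity) (by nlinarith) (by linarith)
  calc (1 + v ^ 2) ^ a ≤ (v ^ 2) ^ a := h1
    _ = v ^ (2 * a) := by
        rw [← Real.rpow_natCast v 2, ← Real.rpow_mul hv0.le]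
        norm_num

lemma aux_psi2 {a : ℝ} (ha : a < -1) :
    Continuous (fun v : ℝ => |v| * (1 + v ^ 2) ^ (a - 1)) ∧
      (∀ v : ℝ, 0 ≤ |v| * (1 + v ^ 2) ^ (a - 1)) ∧
      IntegrableOn (fun v : ℝ => |v| * (1 + v ^ 2) ^ (a - 1)) (Set.Ioi 0) := by
  have hc : Continuous (fun v : ℝ => |v| * (1 + v ^ 2) ^ (a - 1)) := by
    apply Continuous.mul (continuous_abs)
    apply Continuous.rpow_const (by continuity)
    intro v; left; positivity
  have h0 : ∀ v : ℝ, 0 ≤ |v| * (1 + v ^ 2) ^ (a - 1) :=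
    fun v => mul_nonneg (abs_nonneg v) (Real.rpow_nonneg (by positivity) _)
  refine ⟨hc, h0, aux_psi_int hc (p := 2 * a - 1) (by linarith) h0 ?_⟩
  intro v hv
  have hv0 : (0:ℝ) < v := lt_of_lt_of_le one_pos hv
  have h1 : (1 + v ^ 2) ^ (a - 1) ≤ (v ^ 2) ^ (a - 1) :=
    Real.rpow_le_rpow_of_nonpos (by positivity) (by nlinarith) (by linarith)
  have h2 : (v ^ 2 : ℝ) ^ (a - 1) = v ^ (2 * (a - 1)) := by
    rw [← Real.rpow_natCast v 2, ← Real.rpow_mul hv0.le]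
    norm_num
  calc |v| * (1 + v ^ 2) ^ (a - 1) ≤ v * (v ^ 2) ^ (a - 1) := by
        rw [abs_of_nonneg hv0.le]
        exact mul_le_mul_of_nonneg_left h1 hv0.le
    _ = v ^ (2 * a - 1) := by
        rw [h2]
        have h3 := (Real.rpow_add hv0 1 (2 * (a - 1))).symm
        rw [Real.rpow_one] at h3
        rw [h3]
        ring_nf

lemma aux_key {ψ : ℝ → ℝ} (hψc : Continuous ψ) (hψ0 : ∀ v, 0 ≤ ψ v)
    (hψi : IntegrableOn ψ (Set.Ioi 0)) {γ : ℝ → ℝ}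
    (hγc : Continuous γ) (hγ0 : γ 0 = 0)
    (hγd : ∀ t : ℝ, 0 < t → HasDerivAt γ (deriv γ t) t)
    (hmono : MonotoneOn γ (Set.Ici 0))
    (hconv : ConvexOn ℝ (Set.Ici 0) γ)
    (hγabs : ∀ t, |γ (-t)| = |γ t|)
    {c : ℝ} (hc : 0 ≤ c) {f : ℝ → ℂ}
    (hf : ∀ t : ℝ, t ≠ 0 → ‖f t‖ = c * |γ t| * ψ (c * |γ t|) / |t|)
    (hfm : AEStronglyMeasurable f volume) :
    Integrable f volume ∧
      ∫ t : ℝ, ‖f t‖ ≤ 2 * ∫ v in Set.Ioi (0:ℝ), ψ v := by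
  set L : ℝ := ∫ v in Set.Ioi (0:ℝ), ψ v with hL
  set F : ℝ → ℝ := fun s => ∫ v in (0:ℝ)..s, ψ v with hF
  -- FTC derivative of F
  have hFd : ∀ s : ℝ, HasDerivAt F (ψ s) s := fun s =>
    intervalIntegral.integral_hasDerivAt_right (hψc.intervalIntegrable 0 s)
      (hψc.stronglyMeasurableAtFilter volume (𝓝 s)) hψc.continuousAt
  have hFc : Continuous F :=
    continuous_iff_continuousAt.2 fun s => (hFd s).continuousAt
  have hFmono : Monotone F := by
    intro s₁ s₂ h
    have hadd := intervalIntegral.integral_add_adjacent_intervals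
      (hψc.intervalIntegrable (μ := volume) 0 s₁) (hψc.intervalIntegrable (μ := volume) s₁ s₂)
    have hnn : 0 ≤ ∫ v in s₁..s₂, ψ v :=
      intervalIntegral.integral_nonneg h (fun u _ => hψ0 u)
    simp only [hF]
    linarith [hadd]
  have hFle : ∀ s : ℝ, F s ≤ L := by
    intro s
    rcases le_or_gt s 0 with hs | hs
    · calc F s ≤ F 0 := hFmono hs
        _ = 0 := intervalIntegral.integral_same
        _ ≤ L := setIntegral_nonneg measurableSet_Ioi fun v _ => hψ0 v
    · rw [hF]
      simp only
      rw [intervalIntegral.integral_of_le hs.le]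
      apply setIntegral_mono_set hψi
      · exact Filter.Eventually.of_forall fun v => hψ0 v
      · exact (Set.Ioc_subset_Ioi_self).eventuallyLE
  -- the antiderivative g
  set g : ℝ → ℝ := fun t => F (c * γ t) with hg
  have hγnn : ∀ t : ℝ, 0 ≤ t → 0 ≤ γ t := fun t ht => by
    rw [← hγ0]; exact hmono (Set.self_mem_Ici) ht ht
  have hgc : Continuous g := hFc.comp (continuous_const.mul hγc)
  have hgd : ∀ t ∈ Set.Ioi (0:ℝ), HasDerivAt g (c * deriv γ t * ψ (c * γ t)) t := by
    intro t ht
    have h1 := (hFd (c * γ t)).comp t ((hγd t ht).const_mul c)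
    rw [show c * deriv γ t * ψ (c * γ t) = ψ (c * γ t) * (c * deriv γ t) by ring]
    exact h1
  have hd0 : ∀ t : ℝ, 0 < t → γ t / t ≤ deriv γ t := by
    intro t ht
    have hs := hconv.slope_le_of_hasDerivAt (Set.self_mem_Ici) (le_of_lt ht) ht (hγd t ht)
    rwa [slope_def_field, hγ0, sub_zero, sub_zero] at hs
  have hderiv_nn : ∀ t : ℝ, 0 < t → 0 ≤ deriv γ t := fun t ht =>
    le_trans (div_nonneg (hγnn t ht.le) ht.le) (hd0 t ht)
  have hgnonneg : ∀ t ∈ Set.Ioi (0:ℝ), 0 ≤ c * deriv γ t * ψ (c * γ t) := fun t ht =>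
    mul_nonneg (mul_nonneg hc (hderiv_nn t ht)) (hψ0 _)
  -- limit at infinity
  set h : ℝ → ℝ := fun t => g (max t 0) with hh
  have hhmono : Monotone h := by
    intro s t hst
    exact hFmono (mul_le_mul_of_nonneg_left
      (hmono (le_max_right s 0) (le_max_right t 0) (max_le_max hst le_rfl)) hc)
  have hhbdd : ∀ t, h t ≤ L := fun t => hFle _
  have hbdd : BddAbove (Set.range h) := ⟨L, by rintro x ⟨t, rfl⟩; exact hhbdd t⟩
  have hhtend : Tendsto h atTop (𝓝 (⨆ t, h t)) := tendsto_atTop_ciSup hhmono hbdd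
  have hlle : (⨆ t, h t) ≤ L := ciSup_le hhbdd
  have hgtend : Tendsto g atTop (𝓝 (⨆ t, h t)) := by
    apply hhtend.congr'
    filter_upwards [eventually_ge_atTop (0:ℝ)] with t ht
    simp [hh, max_eq_left ht]
  have hg00 : g 0 = 0 := by
    simp [hg, hγ0, hF, intervalIntegral.integral_same]
  -- integrability of the dominating function on Ioi 0
  have hInt' : IntegrableOn (fun t => c * deriv γ t * ψ (c * γ t)) (Set.Ioi 0) :=
    integrableOn_Ioi_deriv_of_nonneg hgc.continuousWithinAt hgd hgnonneg hgtend
  have hval : ∫ t in Set.Ioi (0:ℝ), c * deriv γ t * ψ (c * γ t) ≤ L := by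
    rw [integral_Ioi_of_hasDerivAt_of_nonneg hgc.continuousWithinAt hgd hgnonneg hgtend, hg00,
      sub_zero]
    exact hlle
  -- pointwise comparison on Ioi 0
  have hcomp : ∀ t : ℝ, 0 < t → ‖f t‖ ≤ c * deriv γ t * ψ (c * γ t) := by
    intro t ht
    rw [hf t ht.ne', abs_of_nonneg (hγnn t ht.le), abs_of_pos ht]
    rw [div_le_iff₀ ht]
    have h2 : γ t ≤ deriv γ t * t := by
      have := hd0 t ht
      rw [div_le_iff₀ ht] at this
      linarith
    calc c * γ t * ψ (c * γ t) ≤ c * (deriv γ t * t) * ψ (c * γ t) :=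
          mul_le_mul_of_nonneg_right (mul_le_mul_of_nonneg_left h2 hc) (hψ0 _)
      _ = c * deriv γ t * ψ (c * γ t) * t := by ring
  have hcompneg : ∀ t : ℝ, 0 < t → ‖f (-t)‖ ≤ c * deriv γ t * ψ (c * γ t) := by
    intro t ht
    have h1 : ‖f (-t)‖ = ‖f t‖ := by
      rw [hf (-t) (neg_ne_zero.2 ht.ne'), hf t ht.ne', hγabs, abs_neg]
    rw [h1]; exact hcomp t ht
  -- integrability on Ioi 0
  have hIntIoi : IntegrableOn f (Set.Ioi 0) := by
    apply Integrable.mono' hInt' hfm.restrict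
    filter_upwards [ae_restrict_mem measurableSet_Ioi] with t ht
    exact hcomp t ht
  -- integrability on Iio 0
  have hnegmeas : AEStronglyMeasurable (fun t : ℝ => f (-t)) volume := by
    exact hfm.comp_quasiMeasurePreserving
      (Measure.measurePreserving_neg (volume : Measure ℝ)).quasiMeasurePreserving
  have hIntNeg : IntegrableOn (fun t : ℝ => f (-t)) (Set.Ioi 0) := by
    apply Integrable.mono' hInt' hnegmeas.restrict
    filter_upwards [ae_restrict_mem measurableSet_Ioi] with t ht
    exact hcompneg t ht
  have hIntIio : IntegrableOn f (Set.Iio 0) := by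
    have := (MeasurePreserving.integrableOn_comp_preimage
      (Measure.measurePreserving_neg (volume : Measure ℝ))
      (Homeomorph.neg ℝ).measurableEmbedding (f := f) (s := Set.Iio 0)).mp
    simp only [Set.neg_preimage, Set.neg_Iio, neg_zero] at this
    exact this hIntNeg
  have hrestrict : (volume : Measure ℝ).restrict ({(0:ℝ)}ᶜ) = volume := by
    rw [Measure.restrict_congr_set (t := Set.univ), Measure.restrict_univ]
    rw [ae_eq_univ, compl_compl]
    exact measure_singleton 0
  have hIntf : Integrable f volume := by
    have h2 : IntegrableOn f (Set.Iio 0 ∪ Set.Ioi 0) := hIntIio.union hIntIoi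
    rw [Set.Iio_union_Ioi] at h2
    unfold IntegrableOn at h2
    rwa [hrestrict] at h2
  refine ⟨hIntf, ?_⟩
  -- the norm integral bound
  have hnormsplit : ∫ t : ℝ, ‖f t‖ = (∫ t in Set.Iio (0:ℝ), ‖f t‖) + ∫ t in Set.Ioi (0:ℝ), ‖f t‖ := by
    rw [← setIntegral_union (((Set.Iic_disjoint_Ioi le_rfl).mono_left Set.Iio_subset_Iic_self)) measurableSet_Ioi
      hIntIio.norm hIntIoi.norm, Set.Iio_union_Ioi]
    conv_lhs => rw [← hrestrict]
  have hIoile : ∫ t in Set.Ioi (0:ℝ), ‖f t‖ ≤ L := by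
    refine le_trans (setIntegral_mono_on hIntIoi.norm hInt' measurableSet_Ioi ?_) hval
    intro t ht; exact hcomp t ht
  have hIiole : ∫ t in Set.Iio (0:ℝ), ‖f t‖ ≤ L := by
    have h1 : ∫ t in Set.Iio (0:ℝ), ‖f t‖ = ∫ t in Set.Ioi (0:ℝ), ‖f (-t)‖ := by
      rw [integral_comp_neg_Ioi (0:ℝ) (fun x => ‖f x‖), neg_zero, integral_Iic_eq_integral_Iio]
    rw [h1]
    refine le_trans (setIntegral_mono_on hIntNeg.norm hInt' measurableSet_Ioi ?_) hval
    intro t ht; exact hcompneg t ht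
  rw [hnormsplit]
  linarith

/-- the bound `|η ∂m_z/∂η (ξ,η)| ≤ C (1 + |Im z|)` for `Re z < −1`, where
`η ∂m_z/∂η (ξ,η) = −2πi I₁ + 2z I₂` with
`I₁ = ∫ e^{−2πi(ξt + ηγ(t))} ηγ(t) (1 + η²γ(t)²)^z dt/t` and
`I₂ = ∫ e^{−2πi(ξt + ηγ(t))} η²γ(t)² (1 + η²γ(t)²)^{z−1} dt/t`, both absolutely
convergent; `C` depends only on `Re z` (not on `ξ`, `η`, `Im z`, or `γ`). -/
theorem eta_derivative_multiplier_bound :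
    ∀ a : ℝ, a < -1 → ∃ C : ℝ, ∀ γ : ℝ → ℝ,
      Continuous γ → (∀ t, γ (-t) = -γ t) →
      ContDiffOn ℝ 2 γ (Set.Ici 0) →
      StrictMonoOn γ (Set.Ici 0) → ConvexOn ℝ (Set.Ici 0) γ →
      (MonotoneOn (deriv (deriv γ)) (Set.Ioi 0) ∨
        AntitoneOn (deriv (deriv γ)) (Set.Ioi 0)) →
      (∃ C₀ > (0:ℝ), ∀ t : ℝ, 0 < t → deriv γ t ≤ C₀ * t * deriv (deriv γ) t) →
      ∀ z : ℂ, z.re = a → ∀ ξ η : ℝ, η ≠ 0 →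
        Integrable (fun t : ℝ =>
          Complex.exp (((-(2 * Real.pi * (ξ * t + η * γ t)) : ℝ) : ℂ) * Complex.I) *
            ((η * γ t : ℝ) : ℂ) * ((1 + η ^ 2 * γ t ^ 2 : ℝ) : ℂ) ^ z / (t : ℂ)) volume ∧
        Integrable (fun t : ℝ =>
          Complex.exp (((-(2 * Real.pi * (ξ * t + η * γ t)) : ℝ) : ℂ) * Complex.I) *
            ((η ^ 2 * γ t ^ 2 : ℝ) : ℂ) * ((1 + η ^ 2 * γ t ^ 2 : ℝ) : ℂ) ^ (z - 1) /
              (t : ℂ)) volume ∧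
        ‖(-(2 * Real.pi * Complex.I)) * (∫ t : ℝ,
            Complex.exp (((-(2 * Real.pi * (ξ * t + η * γ t)) : ℝ) : ℂ) * Complex.I) *
              ((η * γ t : ℝ) : ℂ) * ((1 + η ^ 2 * γ t ^ 2 : ℝ) : ℂ) ^ z / (t : ℂ)) +
          2 * z * (∫ t : ℝ,
            Complex.exp (((-(2 * Real.pi * (ξ * t + η * γ t)) : ℝ) : ℂ) * Complex.I) *
              ((η ^ 2 * γ t ^ 2 : ℝ) : ℂ) * ((1 + η ^ 2 * γ t ^ 2 : ℝ) : ℂ) ^ (z - 1) /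
                (t : ℂ))‖ ≤ C * (1 + |z.im|) := by
  intro a ha
  obtain ⟨hψ1c, hψ10, hψ1i⟩ := aux_psi1 ha
  obtain ⟨hψ2c, hψ20, hψ2i⟩ := aux_psi2 ha
  set L₁ : ℝ := ∫ v in Set.Ioi (0:ℝ), (1 + v ^ 2) ^ a with hL₁
  set L₂ : ℝ := ∫ v in Set.Ioi (0:ℝ), |v| * (1 + v ^ 2) ^ (a - 1) with hL₂
  have hL₁0 : 0 ≤ L₁ := setIntegral_nonneg measurableSet_Ioi fun v _ => hψ10 v
  have hL₂0 : 0 ≤ L₂ := setIntegral_nonneg measurableSet_Ioi fun v _ => hψ20 v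
  refine ⟨4 * Real.pi * L₁ + 4 * (|a| + 1) * L₂, ?_⟩
  intro γ hγc hodd hC2 hsm hconv _ _ z hz ξ η hη
  have hγ0 : γ 0 = 0 := by have := hodd 0; simp only [neg_zero] at this; linarith
  have hγd : ∀ t : ℝ, 0 < t → HasDerivAt γ (deriv γ t) t := fun t ht =>
    ((hC2.differentiableOn two_ne_zero).differentiableAt (Ici_mem_nhds ht)).hasDerivAt
  have hmono := hsm.monotoneOn
  have hγabs : ∀ t, |γ (-t)| = |γ t| := fun t => by rw [hodd, abs_neg]
  have hc : (0:ℝ) ≤ |η| := abs_nonneg η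
  have hx : ∀ t : ℝ, (0:ℝ) < 1 + η ^ 2 * γ t ^ 2 := fun t => by positivity
  -- continuity of the numerators
  have hbase : Continuous (fun t : ℝ => ((1 + η ^ 2 * γ t ^ 2 : ℝ) : ℂ)) :=
    Complex.continuous_ofReal.comp
      (continuous_const.add (continuous_const.mul (hγc.pow 2)))
  have hslit : ∀ (w : ℂ) (t : ℝ),
      Continuous (fun t : ℝ => ((1 + η ^ 2 * γ t ^ 2 : ℝ) : ℂ) ^ w) := fun w t => by
    apply hbase.cpow continuous_const
    intro s
    exact Complex.ofReal_mem_slitPlane.2 (hx s)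
  have hexp : Continuous (fun t : ℝ =>
      Complex.exp (((-(2 * Real.pi * (ξ * t + η * γ t)) : ℝ) : ℂ) * Complex.I)) := by
    apply Complex.continuous_exp.comp
    apply Continuous.mul _ continuous_const
    apply Complex.continuous_ofReal.comp
    continuity
  -- measurability
  have hmeas : ∀ (A : ℝ → ℂ), Continuous A →
      AEStronglyMeasurable (fun t : ℝ => A t / (t : ℂ)) volume := by
    intro A hA
    have heq : (fun t : ℝ => A t / (t : ℂ)) = fun t : ℝ => A t * (((t⁻¹ : ℝ)) : ℂ) := by
      funext t; rw [div_eq_mul_inv, Complex.ofReal_inv]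
    rw [heq]
    exact (hA.measurable.mul (Complex.measurable_ofReal.comp measurable_inv)).aestronglyMeasurable
  have hm₁ : AEStronglyMeasurable (fun t : ℝ =>
      Complex.exp (((-(2 * Real.pi * (ξ * t + η * γ t)) : ℝ) : ℂ) * Complex.I) *
        ((η * γ t : ℝ) : ℂ) * ((1 + η ^ 2 * γ t ^ 2 : ℝ) : ℂ) ^ z / (t : ℂ)) volume := by
    apply hmeas
    exact (hexp.mul (Complex.continuous_ofReal.comp (continuous_const.mul hγc))).mul
      (hslit z 0)
  have hm₂ : AEStronglyMeasurable (fun t : ℝ =>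
      Complex.exp (((-(2 * Real.pi * (ξ * t + η * γ t)) : ℝ) : ℂ) * Complex.I) *
        ((η ^ 2 * γ t ^ 2 : ℝ) : ℂ) * ((1 + η ^ 2 * γ t ^ 2 : ℝ) : ℂ) ^ (z - 1) / (t : ℂ))
      volume := by
    apply hmeas
    exact (hexp.mul (Complex.continuous_ofReal.comp
      (continuous_const.mul (hγc.pow 2)))).mul (hslit (z - 1) 0)
  -- norm identities
  have habs2 : ∀ t : ℝ, (|η| * |γ t|) ^ 2 = η ^ 2 * γ t ^ 2 := fun t => by
    rw [mul_pow, sq_abs, sq_abs]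
  have hn₁ : ∀ t : ℝ, t ≠ 0 →
      ‖Complex.exp (((-(2 * Real.pi * (ξ * t + η * γ t)) : ℝ) : ℂ) * Complex.I) *
        ((η * γ t : ℝ) : ℂ) * ((1 + η ^ 2 * γ t ^ 2 : ℝ) : ℂ) ^ z / (t : ℂ)‖ =
      |η| * |γ t| * (1 + (|η| * |γ t|) ^ 2) ^ a / |t| := by
    intro t ht
    rw [norm_div, norm_mul, norm_mul, Complex.norm_exp_ofReal_mul_I, one_mul,
      Complex.norm_real, Real.norm_eq_abs,
      Complex.norm_cpow_eq_rpow_re_of_pos (hx t), hz, Complex.norm_real, Real.norm_eq_abs,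
      abs_mul, habs2]
  have hn₂ : ∀ t : ℝ, t ≠ 0 →
      ‖Complex.exp (((-(2 * Real.pi * (ξ * t + η * γ t)) : ℝ) : ℂ) * Complex.I) *
        ((η ^ 2 * γ t ^ 2 : ℝ) : ℂ) * ((1 + η ^ 2 * γ t ^ 2 : ℝ) : ℂ) ^ (z - 1) / (t : ℂ)‖ =
      |η| * |γ t| * (abs (|η| * |γ t|) * (1 + (|η| * |γ t|) ^ 2) ^ (a - 1)) / |t| := by
    intro t ht
    rw [norm_div, norm_mul, norm_mul, Complex.norm_exp_ofReal_mul_I, one_mul,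
      Complex.norm_real, Real.norm_eq_abs,
      Complex.norm_cpow_eq_rpow_re_of_pos (hx t), Complex.sub_re, Complex.one_re, hz,
      Complex.norm_real, Real.norm_eq_abs, habs2,
      abs_of_nonneg (mul_nonneg hc (abs_nonneg (γ t)))]
    have : |η ^ 2 * γ t ^ 2| = |η| * |γ t| * (|η| * |γ t|) := by
      rw [abs_of_nonneg (by positivity : (0:ℝ) ≤ η ^ 2 * γ t ^ 2), ← habs2]
      ring
    rw [this]
    ring
  have h₁ := aux_key hψ1c hψ10 hψ1i hγc hγ0 hγd hmono hconv hγabs hc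
    (f := fun t : ℝ =>
      Complex.exp (((-(2 * Real.pi * (ξ * t + η * γ t)) : ℝ) : ℂ) * Complex.I) *
        ((η * γ t : ℝ) : ℂ) * ((1 + η ^ 2 * γ t ^ 2 : ℝ) : ℂ) ^ z / (t : ℂ))
    hn₁ hm₁
  have h₂ := aux_key hψ2c hψ20 hψ2i hγc hγ0 hγd hmono hconv hγabs hc
    (f := fun t : ℝ =>
      Complex.exp (((-(2 * Real.pi * (ξ * t + η * γ t)) : ℝ) : ℂ) * Complex.I) *
        ((η ^ 2 * γ t ^ 2 : ℝ) : ℂ) * ((1 + η ^ 2 * γ t ^ 2 : ℝ) : ℂ) ^ (z - 1) / (t : ℂ))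
    hn₂ hm₂
  refine ⟨h₁.1, h₂.1, ?_⟩
  have hb₁ : ‖∫ t : ℝ,
      Complex.exp (((-(2 * Real.pi * (ξ * t + η * γ t)) : ℝ) : ℂ) * Complex.I) *
        ((η * γ t : ℝ) : ℂ) * ((1 + η ^ 2 * γ t ^ 2 : ℝ) : ℂ) ^ z / (t : ℂ)‖ ≤ 2 * L₁ :=
    le_trans (norm_integral_le_integral_norm _) h₁.2
  have hb₂ : ‖∫ t : ℝ,
      Complex.exp (((-(2 * Real.pi * (ξ * t + η * γ t)) : ℝ) : ℂ) * Complex.I) *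
        ((η ^ 2 * γ t ^ 2 : ℝ) : ℂ) * ((1 + η ^ 2 * γ t ^ 2 : ℝ) : ℂ) ^ (z - 1) / (t : ℂ)‖ ≤
      2 * L₂ :=
    le_trans (norm_integral_le_integral_norm _) h₂.2
  have hnc : ‖(-(2 * Real.pi * Complex.I))‖ = 2 * Real.pi := by
    simp [norm_neg, abs_of_nonneg Real.pi_pos.le]
  have hz2 : ‖(2 * z : ℂ)‖ ≤ 2 * (|a| + |z.im|) := by
    rw [norm_mul]
    have h1 : ‖(2:ℂ)‖ = 2 := by norm_num
    rw [h1]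
    have h2 : ‖z‖ ≤ |z.re| + |z.im| := Complex.norm_le_abs_re_add_abs_im z
    rw [hz] at h2
    linarith
  have final : ∀ w₁ w₂ : ℂ, ‖w₁‖ ≤ 2 * L₁ → ‖w₂‖ ≤ 2 * L₂ →
      ‖(-(2 * Real.pi * Complex.I)) * w₁ + 2 * z * w₂‖ ≤
        (4 * Real.pi * L₁ + 4 * (|a| + 1) * L₂) * (1 + |z.im|) := by
    intro w₁ w₂ h1 h2
    have hn := norm_add_le ((-(2 * Real.pi * Complex.I)) * w₁) (2 * z * w₂)
    rw [norm_mul, norm_mul, hnc] at hn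
    have hπ := Real.pi_pos
    have e1 : 2 * Real.pi * ‖w₁‖ ≤ 2 * Real.pi * (2 * L₁) := by
      nlinarith [norm_nonneg w₁]
    have e2 : ‖(2 * z : ℂ)‖ * ‖w₂‖ ≤ 2 * (|a| + |z.im|) * (2 * L₂) :=
      mul_le_mul hz2 h2 (norm_nonneg _) (by positivity)
    have e3 : 2 * Real.pi * (2 * L₁) + 2 * (|a| + |z.im|) * (2 * L₂) ≤
        (4 * Real.pi * L₁ + 4 * (|a| + 1) * L₂) * (1 + |z.im|) := by
      nlinarith [abs_nonneg z.im, abs_nonneg a, hL₁0, hL₂0,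
        mul_nonneg hL₂0 (abs_nonneg z.im),
        mul_nonneg (mul_nonneg hL₁0 (abs_nonneg z.im)) hπ.le,
        mul_nonneg (mul_nonneg hL₂0 (abs_nonneg a)) (abs_nonneg z.im)]
    linarith
  exact final _ _ hb₁ hb₂
end
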